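/- arXiv:1312.3277 — 7 statements merged into one kernel-verified Lean document; each statement's English description precedes it below -/
import Mathlib

section
/- Let a ∈ 𝒜 and let u : 𝕋 → ℂ be continuous with weak derivative u' ∈ L²(𝕋). Then ‖u'‖²_{L²} + ‖u‖²_{L²} ≤ 5 (‖u'‖²_{L²} + ∫ a|u|²), i.e. ‖u‖²_{H¹} ≤ 5 ‖u‖²_{H¹_a}. In particular, ‖·‖_{H¹_a} is a norm on H¹(𝕋), and the constant 5 is independent of a. -/
open MeasureTheory Set

noncomputable section

/-- `a ∈ 𝒜`: a measurable 1-periodic function (a function on the torus `𝕋`),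
nonnegative a.e., integrable over one period, with `∫ a = 1`. -/
def MemA (a : ℝ → ℝ) : Prop :=
  Measurable a ∧ (∀ x, a (x + 1) = a x) ∧ (∀ᵐ x : ℝ, 0 ≤ a x) ∧
    IntegrableOn a (Ioc 0 1) ∧ (∫ x in Ioc (0:ℝ) 1, a x) = 1

/-- for `a ∈ 𝒜` and `u : 𝕋 → ℂ` continuous with weak derivative
`u' ∈ L²(𝕋)`, one has `‖u‖²_{H¹} ≤ 5 ‖u‖²_{H¹_a}`, i.e.
`‖u'‖²_{L²} + ‖u‖²_{L²} ≤ 5 (‖u'‖²_{L²} + ∫ a |u|²)`, the constant `5` being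
independent of `a`. -/
theorem statement_3 (a : ℝ → ℝ) (ha : MemA a)
    (u u' : ℝ → ℂ)
    (hu_per : ∀ x, u (x + 1) = u x)
    (hu'_per : ∀ x, u' (x + 1) = u' x)
    (hu_cont : Continuous u)
    (hu_prim : ∀ x, u x = u 0 + ∫ t in (0:ℝ)..x, u' t)
    (hu'_L2 : MemLp u' 2 (volume.restrict (Ioc (0:ℝ) 1))) :
    (∫ x in Ioc (0:ℝ) 1, ‖u' x‖ ^ 2) + (∫ x in Ioc (0:ℝ) 1, ‖u x‖ ^ 2)
      ≤ 5 * ((∫ x in Ioc (0:ℝ) 1, ‖u' x‖ ^ 2)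
              + (∫ x in Ioc (0:ℝ) 1, a x * ‖u x‖ ^ 2)) := by
  obtain ⟨ha_meas, ha_per, ha_nn, ha_int, ha_one⟩ := ha
  set μ : Measure ℝ := volume.restrict (Ioc (0:ℝ) 1) with hμ
  have hμuniv : μ Set.univ = 1 := by
    rw [hμ, Measure.restrict_apply_univ, Real.volume_Ioc]
    norm_num
  haveI : IsFiniteMeasure μ := ⟨by rw [hμuniv]; exact ENNReal.one_lt_top⟩
  set D : ℝ := ∫ x in Ioc (0:ℝ) 1, ‖u' x‖ ^ 2 with hD
  set A : ℝ := ∫ x in Ioc (0:ℝ) 1, a x * ‖u x‖ ^ 2 with hA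
  set L : ℝ := ∫ x in Ioc (0:ℝ) 1, ‖u' x‖ with hL
  set B : ℝ := ∫ x in Ioc (0:ℝ) 1, a x * ‖u x‖ with hB
  have ha_nn' : ∀ᵐ x ∂μ, 0 ≤ a x := ae_restrict_of_ae ha_nn
  have hu'_int : IntegrableOn u' (Ioc (0:ℝ) 1) := hu'_L2.integrable one_le_two
  have hDnn : 0 ≤ D := integral_nonneg fun x => by positivity
  have hLnn : 0 ≤ L := integral_nonneg fun x => norm_nonneg _
  have hAnn : 0 ≤ A := integral_nonneg_of_ae <| by
    filter_upwards [ha_nn'] with x hx; positivity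
  -- global bound on ‖u‖
  obtain ⟨C, hC⟩ : ∃ C, ∀ x ∈ Icc (0:ℝ) 1, ‖u x‖ ≤ C :=
    isCompact_Icc.exists_bound_of_continuousOn hu_cont.continuousOn
  have hCg : ∀ x : ℝ, ‖u x‖ ≤ C := by
    intro x
    have hper : Function.Periodic u 1 := hu_per
    obtain ⟨y, hy, hxy⟩ := hper.exists_mem_Ico₀ one_pos x
    rw [hxy]; exact hC y (Ico_subset_Icc_self hy)
  have hC0 : 0 ≤ C := le_trans (norm_nonneg _) (hCg 0)
  -- integrability facts
  have hmeas_u : AEStronglyMeasurable u μ := hu_cont.aestronglyMeasurable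
  have I_au2 : Integrable (fun y => a y * ‖u y‖ ^ 2) μ := by
    have : Integrable (fun y => ‖u y‖ ^ 2 * a y) μ :=
      ha_int.bdd_mul ((hu_cont.norm.pow 2).aestronglyMeasurable) <|
        Filter.Eventually.of_forall fun y => by
          rw [Real.norm_of_nonneg (by positivity)]
          exact pow_le_pow_left₀ (norm_nonneg _) (hCg y) 2
    exact this.congr <| Filter.Eventually.of_forall fun y => mul_comm _ _
  have I_au : Integrable (fun y => a y * ‖u y‖) μ := by
    have : Integrable (fun y => ‖u y‖ * a y) μ :=
      ha_int.bdd_mul (hu_cont.norm.aestronglyMeasurable) <|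
        Filter.Eventually.of_forall fun y => by
          rw [Real.norm_of_nonneg (norm_nonneg _)]; exact hCg y
    exact this.congr <| Filter.Eventually.of_forall fun y => mul_comm _ _
  have hBnn : 0 ≤ B := integral_nonneg_of_ae <| by
    filter_upwards [ha_nn'] with x hx; positivity
  have I_usq : Integrable (fun x => ‖u x‖ ^ 2) μ :=
    (hu_cont.norm.pow 2).integrableOn_Ioc
  have hpq : (2:ℝ).HolderConjugate 2 := ⟨by norm_num, by norm_num, by norm_num⟩
  have h2 : ENNReal.ofReal (2:ℝ) = 2 := by norm_num
  -- Hölder: L ≤ √D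
  have hLD : L ≤ Real.sqrt D := by
    have := integral_mul_le_Lp_mul_Lq_of_nonneg (μ := μ) hpq
      (f := fun x => ‖u' x‖) (g := fun _ => (1:ℝ))
      (Filter.Eventually.of_forall fun x => norm_nonneg _)
      (Filter.Eventually.of_forall fun _ => zero_le_one)
      (h2 ▸ hu'_L2.norm) (h2 ▸ memLp_const 1)
    simpa [Real.rpow_two, Real.sqrt_eq_rpow, Measure.real, hμuniv] using this
  have hL2D : L ^ 2 ≤ D := by
    calc L ^ 2 ≤ Real.sqrt D ^ 2 := pow_le_pow_left₀ hLnn hLD 2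
    _ = D := Real.sq_sqrt hDnn
  -- Hölder: B ≤ √A
  have hBA : B ≤ Real.sqrt A := by
    have hsa_meas : AEStronglyMeasurable (fun x => Real.sqrt (a x)) μ :=
      (Real.continuous_sqrt.measurable.comp ha_meas).aestronglyMeasurable
    have hf : MemLp (fun x => Real.sqrt (a x)) 2 μ := by
      rw [memLp_two_iff_integrable_sq hsa_meas]
      exact ha_int.congr <| by
        filter_upwards [ha_nn'] with x hx
        rw [Real.sq_sqrt hx]
    have hg : MemLp (fun x => Real.sqrt (a x) * ‖u x‖) 2 μ := by
      refine (memLp_two_iff_integrable_sq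
        (f := fun x => Real.sqrt (a x) * ‖u x‖) ?_).mpr ?_
      · exact hsa_meas.mul hu_cont.norm.aestronglyMeasurable
      · exact I_au2.congr <| by
          filter_upwards [ha_nn'] with x hx
          rw [mul_pow, Real.sq_sqrt hx]
    have := integral_mul_le_Lp_mul_Lq_of_nonneg (μ := μ) hpq
      (f := fun x => Real.sqrt (a x)) (g := fun x => Real.sqrt (a x) * ‖u x‖)
      (Filter.Eventually.of_forall fun x => Real.sqrt_nonneg _)
      (Filter.Eventually.of_forall fun x => mul_nonneg (Real.sqrt_nonneg _) (norm_nonneg _))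
      (h2 ▸ hf) (h2 ▸ hg)
    have e1 : ∫ x, Real.sqrt (a x) * (Real.sqrt (a x) * ‖u x‖) ∂μ = B := by
      rw [hB]; apply integral_congr_ae
      filter_upwards [ha_nn'] with x hx
      rw [← mul_assoc, Real.mul_self_sqrt hx]
    have e2 : ∫ x, Real.sqrt (a x) ^ (2:ℝ) ∂μ = 1 := by
      rw [← ha_one]; apply integral_congr_ae
      filter_upwards [ha_nn'] with x hx
      rw [Real.rpow_two, Real.sq_sqrt hx]
    have e3 : ∫ x, (Real.sqrt (a x) * ‖u x‖) ^ (2:ℝ) ∂μ = A := by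
      rw [hA]; apply integral_congr_ae
      filter_upwards [ha_nn'] with x hx
      rw [Real.rpow_two, mul_pow, Real.sq_sqrt hx]
    rw [e1, e2, e3] at this
    simpa [Real.sqrt_eq_rpow] using this
  -- interval integrability on subintervals
  have hii : ∀ s ∈ Icc (0:ℝ) 1, ∀ t ∈ Icc (0:ℝ) 1, IntervalIntegrable u' volume s t := by
    intro s hs t ht
    rw [intervalIntegrable_iff]
    refine hu'_int.mono_set ?_
    rw [Set.uIoc]
    exact Set.Ioc_subset_Ioc (le_inf hs.1 ht.1) (sup_le hs.2 ht.2)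
  -- key pointwise estimate
  have key2 : ∀ s ∈ Icc (0:ℝ) 1, ∀ t ∈ Icc (0:ℝ) 1, s ≤ t → ‖u t - u s‖ ≤ L := by
    intro s hs t ht hst
    have hdiff : u t - u s = ∫ r in s..t, u' r := by
      rw [hu_prim t, hu_prim s, add_sub_add_left_eq_sub]
      exact intervalIntegral.integral_interval_sub_left
        (hii 0 (by norm_num) t ht) (hii 0 (by norm_num) s hs)
    rw [hdiff, intervalIntegral.integral_of_le hst]
    calc ‖∫ r in Ioc s t, u' r‖ ≤ ∫ r in Ioc s t, ‖u' r‖ :=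
          norm_integral_le_integral_norm _
      _ ≤ L := by
          rw [hL]
          exact setIntegral_mono_set hu'_int.norm
            (Filter.Eventually.of_forall fun _ => norm_nonneg _)
            ((Ioc_subset_Ioc hs.1 ht.2).eventuallyLE)
  have hkey : ∀ x ∈ Icc (0:ℝ) 1, ∀ y ∈ Icc (0:ℝ) 1, ‖u x‖ ≤ ‖u y‖ + L := by
    intro x hx y hy
    have h1 : ‖u x‖ ≤ ‖u y‖ + ‖u x - u y‖ := by
      have := norm_add_le (u y) (u x - u y)
      simpa using this
    rcases le_total y x with h | h
    · exact h1.trans (add_le_add_right (key2 y hy x hx h) _)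
    · rw [norm_sub_rev] at h1
      exact h1.trans (add_le_add_right (key2 x hx y hy h) _)
  -- integrate in y against a
  have key3 : ∀ x ∈ Icc (0:ℝ) 1, ‖u x‖ ≤ B + L := by
    intro x hx
    have e : ‖u x‖ = ∫ y in Ioc (0:ℝ) 1, a y * ‖u x‖ := by
      rw [integral_mul_const, ha_one, one_mul]
    rw [e]
    have step : ∫ y in Ioc (0:ℝ) 1, a y * ‖u x‖
        ≤ ∫ y in Ioc (0:ℝ) 1, (a y * ‖u y‖ + a y * L) := by
      refine integral_mono_ae (ha_int.mul_const _) (I_au.add (ha_int.mul_const L)) ?_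
      filter_upwards [ha_nn', ae_restrict_mem measurableSet_Ioc] with y hy hymem
      rw [← mul_add]
      exact mul_le_mul_of_nonneg_left
        (hkey x hx y (Ioc_subset_Icc_self hymem)) hy
    refine step.trans ?_
    rw [integral_add I_au (ha_int.mul_const L), integral_mul_const, ha_one, one_mul]
  -- pointwise square bound
  have key4 : ∀ x ∈ Icc (0:ℝ) 1, ‖u x‖ ^ 2 ≤ 2 * A + 2 * D := by
    intro x hx
    have h1 : ‖u x‖ ≤ Real.sqrt A + Real.sqrt D :=
      (key3 x hx).trans (add_le_add hBA hLD)
    have h2 : ‖u x‖ ^ 2 ≤ (Real.sqrt A + Real.sqrt D) ^ 2 :=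
      pow_le_pow_left₀ (norm_nonneg _) h1 2
    nlinarith [Real.sq_sqrt hAnn, Real.sq_sqrt hDnn, Real.sqrt_nonneg A,
      Real.sqrt_nonneg D, sq_nonneg (Real.sqrt A - Real.sqrt D)]
  -- integrate the square bound
  have husq : (∫ x in Ioc (0:ℝ) 1, ‖u x‖ ^ 2) ≤ 2 * A + 2 * D := by
    have : (∫ x in Ioc (0:ℝ) 1, ‖u x‖ ^ 2)
        ≤ ∫ _x in Ioc (0:ℝ) 1, (2 * A + 2 * D) := by
      refine integral_mono_ae I_usq (integrable_const _) ?_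
      filter_upwards [ae_restrict_mem measurableSet_Ioc] with x hxmem
      exact key4 x (Ioc_subset_Icc_self hxmem)
    rwa [setIntegral_const, Real.volume_real_Ioc, smul_eq_mul, sub_zero,
      max_eq_left zero_le_one, one_mul] at this
  linarith
end
end

section
/- Let a ∈ 𝒜 and let u : 𝕋 → ℂ be continuous with weak derivative u' ∈ L²(𝕋). Then ‖u‖²_∞ ≤ 4 (‖u'‖²_{L²} + ∫ a|u|²), where ‖u‖_∞ = max_{x∈𝕋} |u(x)| and the constant 4 is independent of a. -/
open MeasureTheory Set

noncomputable section

/-- for `a ∈ 𝒜` and `u : 𝕋 → ℂ` continuous with weak derivative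
`u' ∈ L²(𝕋)`, one has `‖u‖²_∞ ≤ 4 (‖u'‖²_{L²} + ∫ a |u|²)`, the constant `4`
being independent of `a`.  (The bound `‖u‖∞² ≤ …` is expressed pointwise.) -/
theorem statement_4 (a : ℝ → ℝ) (ha : MemA a)
    (u u' : ℝ → ℂ)
    (hu_per : ∀ x, u (x + 1) = u x)
    (hu'_per : ∀ x, u' (x + 1) = u' x)
    (hu_cont : Continuous u)
    (hu_prim : ∀ x, u x = u 0 + ∫ t in (0:ℝ)..x, u' t)
    (hu'_L2 : MemLp u' 2 (volume.restrict (Ioc (0:ℝ) 1))) :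
    ∀ x : ℝ, ‖u x‖ ^ 2
      ≤ 4 * ((∫ x in Ioc (0:ℝ) 1, ‖u' x‖ ^ 2)
              + (∫ x in Ioc (0:ℝ) 1, a x * ‖u x‖ ^ 2)) := by
  intro x
  obtain ⟨ha_meas, ha_per, ha_nonneg, ha_int, ha_one⟩ := ha
  haveI : IsFiniteMeasure (volume.restrict (Ioc (0:ℝ) 1)) := by
    constructor
    rw [Measure.restrict_apply_univ, Real.volume_Ioc]
    norm_num
  -- u' is integrable on Ioc 0 1
  have hu'_int : IntegrableOn u' (Ioc (0:ℝ) 1) := hu'_L2.integrable one_le_two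
  -- ‖u'‖ is integrable on Ioc 0 1
  have hnu'_int : IntegrableOn (fun t => ‖u' t‖) (Ioc (0:ℝ) 1) := hu'_int.norm
  -- ‖u'‖^2 is integrable on Ioc 0 1
  have hnu'2_int : IntegrableOn (fun t => ‖u' t‖ ^ 2) (Ioc (0:ℝ) 1) := by
    have h := hu'_L2.integrable_norm_rpow two_ne_zero ENNReal.ofNat_ne_top
    refine h.congr (Filter.Eventually.of_forall fun t => ?_)
    norm_num [Real.rpow_natCast]
  set I1 : ℝ := ∫ t in Ioc (0:ℝ) 1, ‖u' t‖ with hI1def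
  set K : ℝ := ∫ t in Ioc (0:ℝ) 1, ‖u' t‖ ^ 2 with hKdef
  set J : ℝ := ∫ t in Ioc (0:ℝ) 1, a t * ‖u t‖ ^ 2 with hJdef
  have hI1_nonneg : 0 ≤ I1 := integral_nonneg fun t => norm_nonneg _
  have hK_nonneg : 0 ≤ K := integral_nonneg fun t => sq_nonneg _
  -- Cauchy–Schwarz: I1 ^ 2 ≤ K
  have hCS : I1 ^ 2 ≤ K := by
    have hone : MemLp (fun _ : ℝ => (1:ℝ)) (ENNReal.ofReal 2)
        (volume.restrict (Ioc (0:ℝ) 1)) := memLp_const 1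
    have hf2 : MemLp (fun t => ‖u' t‖) (ENNReal.ofReal 2)
        (volume.restrict (Ioc (0:ℝ) 1)) := by
      have : (ENNReal.ofReal 2) = 2 := by norm_num
      rw [this]
      exact hu'_L2.norm
    have h := integral_mul_le_Lp_mul_Lq_of_nonneg (μ := volume.restrict (Ioc (0:ℝ) 1))
      (Real.holderConjugate_iff_eq_conjExponent one_lt_two |>.mpr (by norm_num))
      (Filter.Eventually.of_forall fun t => norm_nonneg (u' t))
      (Filter.Eventually.of_forall fun _ => zero_le_one) hf2 hone
    simp only [mul_one, one_pow] at h
    rw [integral_const] at h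
    simp only [Measure.restrict_apply_univ, Real.volume_Ioc, sub_zero,
      ENNReal.toReal_ofReal zero_le_one, smul_eq_mul, mul_one] at h
    have h' : I1 ≤ K ^ ((1:ℝ)/2) := by
      rw [hI1def, hKdef]
      simpa using h
    calc I1 ^ 2 ≤ (K ^ ((1:ℝ)/2)) ^ 2 := by
          apply pow_le_pow_left₀ hI1_nonneg h'
      _ = K := by
          rw [← Real.rpow_natCast (K ^ ((1:ℝ)/2)) 2, ← Real.rpow_mul hK_nonneg]
          norm_num
  -- periodicity of u
  have hper : Function.Periodic u 1 := hu_per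
  -- global bound on u, and pointwise estimate
  set x₀ : ℝ := Int.fract x with hx₀def
  have hx₀mem : x₀ ∈ Icc (0:ℝ) 1 := ⟨Int.fract_nonneg x, (Int.fract_lt_one x).le⟩
  have hux : u x = u x₀ := by
    have := hper.sub_int_mul_eq (x := x) ⌊x⌋
    rw [hx₀def, Int.fract]
    rw [← this]
    norm_num
  -- pointwise bound: for y ∈ Ioc 0 1, ‖u x‖ ≤ ‖u y‖ + I1
  have key : ∀ y ∈ Ioc (0:ℝ) 1, ‖u x‖ ≤ ‖u y‖ + I1 := by
    intro y hy
    have hsub : u x₀ - u y = ∫ t in y..x₀, u' t := by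
      rw [hu_prim x₀, hu_prim y]
      have h1 : IntervalIntegrable u' volume 0 x₀ := by
        rw [intervalIntegrable_iff]
        refine hu'_int.mono_set ?_
        rw [uIoc_of_le hx₀mem.1]
        exact Ioc_subset_Ioc le_rfl hx₀mem.2
      have h2 : IntervalIntegrable u' volume 0 y := by
        rw [intervalIntegrable_iff]
        refine hu'_int.mono_set ?_
        rw [uIoc_of_le hy.1.le]
        exact Ioc_subset_Ioc le_rfl hy.2
      rw [← intervalIntegral.integral_interval_sub_left h1 h2]
      ring
    have hbound : ‖u x₀ - u y‖ ≤ I1 := by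
      rw [hsub]
      refine (intervalIntegral.norm_integral_le_integral_norm_uIoc).trans ?_
      refine setIntegral_mono_set hnu'_int
        (Filter.Eventually.of_forall fun t => norm_nonneg _) ?_
      refine Filter.Eventually.of_forall ?_
      intro t ht
      rcases le_total y x₀ with h | h
      · rw [uIoc_of_le h] at ht
        exact ⟨lt_of_lt_of_le hy.1 ht.1.le, le_trans ht.2 hx₀mem.2⟩
      · rw [uIoc_of_ge h] at ht
        exact ⟨lt_of_le_of_lt hx₀mem.1 ht.1, le_trans ht.2 hy.2⟩
    calc ‖u x‖ = ‖u x₀‖ := by rw [hux]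
      _ ≤ ‖u y‖ + ‖u x₀ - u y‖ := by
          have := norm_sub_norm_le (u x₀) (u y)
          linarith [norm_sub_norm_le (u x₀) (u y)]
      _ ≤ ‖u y‖ + I1 := by linarith
  -- squared pointwise bound
  have key2 : ∀ y ∈ Ioc (0:ℝ) 1, ‖u x‖ ^ 2 ≤ 2 * ‖u y‖ ^ 2 + 2 * I1 ^ 2 := by
    intro y hy
    have h := key y hy
    nlinarith [mul_self_le_mul_self (norm_nonneg (u x)) h, sq_nonneg (‖u y‖ - I1),
      norm_nonneg (u y), hI1_nonneg]
  -- global bound on ‖u‖ (for integrability)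
  obtain ⟨C, hC⟩ : ∃ C, ∀ y ∈ Icc (0:ℝ) 1, ‖u y‖ ≤ C :=
    isCompact_Icc.exists_bound_of_continuousOn hu_cont.continuousOn
  have hCglob : ∀ y : ℝ, ‖u y‖ ≤ C := by
    intro y
    have : u y = u (Int.fract y) := by
      have := hper.sub_int_mul_eq (x := y) ⌊y⌋
      rw [Int.fract]; rw [← this]; norm_num
    rw [this]
    exact hC _ ⟨Int.fract_nonneg y, (Int.fract_lt_one y).le⟩
  -- integrability of a * ‖u‖^2
  have hau_int : IntegrableOn (fun y => a y * ‖u y‖ ^ 2) (Ioc (0:ℝ) 1) := by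
    have hcomm : (fun y => a y * ‖u y‖ ^ 2) = fun y => ‖u y‖ ^ 2 * a y := by
      funext y; ring
    rw [hcomm]
    refine Integrable.bdd_mul (c := C ^ 2) ha_int ?_ ?_
    · exact ((hu_cont.norm.pow 2).aestronglyMeasurable)
    · refine Filter.Eventually.of_forall fun y => ?_
      rw [Real.norm_eq_abs, abs_of_nonneg (sq_nonneg _)]
      exact pow_le_pow_left₀ (norm_nonneg _) (hCglob y) 2
  -- integrability of the comparison function
  have hcmp_int : IntegrableOn (fun y => a y * (2 * ‖u y‖ ^ 2 + 2 * I1 ^ 2))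
      (Ioc (0:ℝ) 1) := by
    have : (fun y => a y * (2 * ‖u y‖ ^ 2 + 2 * I1 ^ 2))
        = fun y => 2 * (a y * ‖u y‖ ^ 2) + (2 * I1 ^ 2) * a y := by
      funext y; ring
    rw [this]
    exact (hau_int.const_mul 2).add (ha_int.const_mul _)
  -- J ≥ 0
  have hJ_nonneg : 0 ≤ J := by
    refine integral_nonneg_of_ae ?_
    filter_upwards [ae_restrict_of_ae ha_nonneg] with y hy
    exact mul_nonneg hy (sq_nonneg _)
  -- main estimate
  have hmain : ‖u x‖ ^ 2 ≤ 2 * J + 2 * I1 ^ 2 := by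
    have h1 : ‖u x‖ ^ 2 = ∫ y in Ioc (0:ℝ) 1, a y * ‖u x‖ ^ 2 := by
      rw [integral_mul_const, ha_one, one_mul]
    have h2 : (∫ y in Ioc (0:ℝ) 1, a y * ‖u x‖ ^ 2)
        ≤ ∫ y in Ioc (0:ℝ) 1, a y * (2 * ‖u y‖ ^ 2 + 2 * I1 ^ 2) := by
      refine integral_mono_ae (ha_int.mul_const _) hcmp_int ?_
      filter_upwards [ae_restrict_of_ae ha_nonneg, ae_restrict_mem measurableSet_Ioc]
        with y hy hymem
      exact mul_le_mul_of_nonneg_left (key2 y hymem) hy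
    have h3 : (∫ y in Ioc (0:ℝ) 1, a y * (2 * ‖u y‖ ^ 2 + 2 * I1 ^ 2))
        = 2 * J + 2 * I1 ^ 2 := by
      have : (fun y => a y * (2 * ‖u y‖ ^ 2 + 2 * I1 ^ 2))
          = fun y => 2 * (a y * ‖u y‖ ^ 2) + (2 * I1 ^ 2) * a y := by
        funext y; ring
      rw [this, integral_add ((hau_int.const_mul 2)) (ha_int.const_mul _),
        integral_const_mul, integral_const_mul, ha_one, hJdef]
      ring
    linarith
  linarith
end
end

section
/- Let a ∈ 𝒜 and ξ ∈ ℝ with ξ ≠ 0. If u is a periodic W^{2,1} function satisfying −u''(x) + iξ a(x) u(x) = 0 for a.e. x, then u ≡ 0. Consequently, for fixed ξ ≠ 0 and a ∈ 𝒜, a periodic W^{2,1} solution of −u'' + iξ a u = h is unique for any h ∈ L¹(𝕋). -/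
open MeasureTheory Set Complex

noncomputable section

/-- A periodic `W^{2,1}` function: a 1-periodic continuously differentiable
`u : ℝ → ℂ` whose derivative is absolutely continuous with (periodic) second
derivative `u'' ∈ L¹(𝕋)`. -/
def IsPeriodicW21 (u u'' : ℝ → ℂ) : Prop :=
  (∀ x, u (x + 1) = u x) ∧ (∀ x, u'' (x + 1) = u'' x) ∧
  ContDiff ℝ 1 u ∧
  (∀ x, deriv u x = deriv u 0 + ∫ t in (0:ℝ)..x, u'' t) ∧
  IntegrableOn u'' (Ioc 0 1)

/-- A periodic function integrable over one period is interval integrable on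
any interval. -/
lemma periodic_intervalIntegrable {f : ℝ → ℂ} (hper : ∀ x, f (x + 1) = f x)
    (hi : IntegrableOn f (Ioc 0 1)) (a b : ℝ) : IntervalIntegrable f volume a b := by
  have hp : Function.Periodic f 1 := hper
  have h01 : IntervalIntegrable f volume 0 1 :=
    (intervalIntegrable_iff_integrableOn_Ioc_of_le zero_le_one).2 hi
  have hunit : ∀ n : ℤ, IntervalIntegrable f volume n (n + 1) := by
    intro n
    have h1 := h01.comp_add_right (-(n : ℝ))
    have h2 : (fun x => f (x + -(n : ℝ))) = f := by
      funext x
      have := (hp.int_mul (-n)) x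
      simpa using this
    rw [h2] at h1
    simpa [sub_neg_eq_add, add_comm] using h1
  have hnat : ∀ n : ℕ, IntervalIntegrable f volume (-(n : ℝ)) n := by
    intro n
    induction n with
    | zero => simpa using IntervalIntegrable.refl (f := f) (μ := volume) (a := 0)
    | succ k ih =>
      have hl : IntervalIntegrable f volume (-(k : ℝ) - 1) (-(k : ℝ)) := by
        have hh := hunit (-(k + 1) : ℤ)
        have e1 : ((-(k + 1) : ℤ) : ℝ) = -(k : ℝ) - 1 := by push_cast; ring
        have e2 : ((-(k + 1) : ℤ) : ℝ) + 1 = -(k : ℝ) := by push_cast; ring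
        rwa [e2, e1] at hh
      have hrr : IntervalIntegrable f volume (k : ℝ) ((k : ℝ) + 1) := by
        have hh := hunit (k : ℤ)
        push_cast at hh
        exact hh
      have hfull := (hl.trans ih).trans hrr
      push_cast
      rw [show -((k : ℝ) + 1) = -(k : ℝ) - 1 by ring]
      exact hfull
  obtain ⟨n, hn⟩ := exists_nat_ge (max |a| |b|)
  refine (hnat n).mono_set ?_
  have hsub : Set.uIcc a b ⊆ Set.Icc (-(n : ℝ)) n := by
    have ha' : |a| ≤ n := le_trans (le_max_left _ _) hn
    have hb' : |b| ≤ n := le_trans (le_max_right _ _) hn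
    rw [abs_le] at ha' hb'
    exact Set.uIcc_subset_Icc ⟨ha'.1, ha'.2⟩ ⟨hb'.1, hb'.2⟩
  refine hsub.trans ?_
  rw [Set.uIcc_of_le (neg_le_self n.cast_nonneg)]

/-- Key lemma: a periodic `W^{2,1}` solution of the homogeneous equation
vanishes identically. -/
lemma key_zero (a : ℝ → ℝ) (ha : MemA a) (ξ : ℝ) (hξ : ξ ≠ 0) (u u'' : ℝ → ℂ)
    (hu : IsPeriodicW21 u u'')
    (heq : ∀ᵐ x : ℝ, -u'' x + (ξ : ℂ) * Complex.I * (a x : ℂ) * u x = 0) :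
    ∀ x, u x = 0 := by
  obtain ⟨ham, hap, ha0, hai, ha1⟩ := ha
  obtain ⟨hup, hu''p, hC, hrep, hint⟩ := hu
  set d : ℝ → ℂ := deriv u with hd
  have hdiff : Differentiable ℝ u := hC.differentiable one_ne_zero
  have hdc : Continuous d := hC.continuous_deriv le_rfl
  have huc : Continuous u := hC.continuous
  have hu10 : u 1 = u 0 := by simpa using hup 0
  have hdper : ∀ x, d (x + 1) = d x := by
    intro x
    have h1 : deriv (fun y => u (y + 1)) x = deriv u (x + 1) := deriv_comp_add_const u 1 x
    have h2 : (fun y => u (y + 1)) = u := funext hup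
    rw [h2] at h1
    exact h1.symm
  have hd10 : d 1 = d 0 := by simpa using hdper 0
  have hFTC : ∀ t₁ t₂ : ℝ, (∫ s in t₁..t₂, d s) = u t₂ - u t₁ := fun t₁ t₂ =>
    intervalIntegral.integral_deriv_eq_sub (fun x _ => hdiff x) (hdc.intervalIntegrable _ _)
  have hIocd : ∀ t₁ t₂ : ℝ, t₁ ≤ t₂ → (∫ s in Ioc t₁ t₂, d s) = u t₂ - u t₁ := by
    intro t₁ t₂ h
    rw [← intervalIntegral.integral_of_le h]
    exact hFTC t₁ t₂
  have hsum : (∫ t in Ioc (0:ℝ) 1, u'' t) = 0 := by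
    have h1 := hrep 1
    rw [hd10] at h1
    have h2 : (∫ t in (0:ℝ)..1, u'' t) = 0 := left_eq_add.mp h1
    rwa [intervalIntegral.integral_of_le zero_le_one] at h2
  -- integrability of products with bounded continuous functions
  have hbd : ∀ g : ℝ → ℂ, Continuous g →
      IntegrableOn (fun t => g t * u'' t) (Ioc (0:ℝ) 1) := by
    intro g hg
    obtain ⟨C, hCb⟩ := isCompact_Icc.exists_bound_of_continuousOn
      (hg.continuousOn : ContinuousOn g (Icc (0:ℝ) 1))
    refine hint.bdd_mul (c := C) hg.aestronglyMeasurable.restrict ?_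
    exact (ae_restrict_iff' measurableSet_Ioc).2 (Filter.Eventually.of_forall
      fun x hx => hCb x (Ioc_subset_Icc_self hx))
  set v : ℝ → ℂ := fun s => (starRingEnd ℂ) (d s) with hv
  have hvc : Continuous v := RCLike.continuous_conj.comp hdc
  set μ : Measure ℝ := volume.restrict (Ioc (0:ℝ) 1) with hμ
  set F : ℝ → ℝ → ℂ := fun t s => if t < s then u'' t * v s else 0 with hF
  have hFint : Integrable (Function.uncurry F) (μ.prod μ) := by
    have h1 : Integrable (fun p : ℝ × ℝ => u'' p.1 * v p.2) (μ.prod μ) :=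
      hint.mul_prod hvc.integrableOn_Ioc
    have h2 : Function.uncurry F =
        ({p : ℝ × ℝ | p.1 < p.2}).indicator (fun p => u'' p.1 * v p.2) := by
      ext p
      by_cases h : p.1 < p.2 <;> simp [Function.uncurry, hF, h, Set.indicator_apply]
    rw [h2]
    exact h1.indicator (measurableSet_lt measurable_fst measurable_snd)
  have hswap : (∫ t, (∫ s, F t s ∂μ) ∂μ) = ∫ s, (∫ t, F t s ∂μ) ∂μ :=
    MeasureTheory.integral_integral_swap hFint
  have hmem : ∀ᵐ t ∂μ, t ∈ Ioc (0:ℝ) 1 := ae_restrict_mem measurableSet_Ioc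
  -- LHS of Fubini
  have hL : (∫ t, (∫ s, F t s ∂μ) ∂μ) =
      ∫ t in Ioc (0:ℝ) 1, u'' t * ((starRingEnd ℂ) (u 1) - (starRingEnd ℂ) (u t)) := by
    refine integral_congr_ae ?_
    filter_upwards [hmem] with t ht
    have h1 : (fun s => F t s) = (Ioi t).indicator (fun s => u'' t * v s) := by
      ext s
      by_cases h : t < s <;> simp [hF, h, Set.indicator_apply]
    rw [h1, integral_indicator measurableSet_Ioi, hμ,
      Measure.restrict_restrict measurableSet_Ioi]
    have h2 : Ioi t ∩ Ioc 0 1 = Ioc t 1 := by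
      ext s
      constructor
      · rintro ⟨h3, _, h5⟩; exact ⟨h3, h5⟩
      · rintro ⟨h3, h4⟩; exact ⟨h3, lt_trans ht.1 h3, h4⟩
    rw [h2, MeasureTheory.integral_const_mul]
    congr 1
    have h3 : (∫ s in Ioc t 1, v s) = (starRingEnd ℂ) (∫ s in Ioc t 1, d s) := by
      simp only [hv]
      exact integral_conj
    rw [h3, hIocd t 1 ht.2, map_sub]
  have hI2 : IntegrableOn (fun t => (starRingEnd ℂ) (u t) * u'' t) (Ioc (0:ℝ) 1) :=
    hbd _ (RCLike.continuous_conj.comp huc)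
  have hL2 : (∫ t in Ioc (0:ℝ) 1, u'' t * ((starRingEnd ℂ) (u 1) - (starRingEnd ℂ) (u t)))
      = -(∫ t in Ioc (0:ℝ) 1, (starRingEnd ℂ) (u t) * u'' t) := by
    have h1 : (fun t => u'' t * ((starRingEnd ℂ) (u 1) - (starRingEnd ℂ) (u t)))
        = fun t => (starRingEnd ℂ) (u 1) * u'' t - (starRingEnd ℂ) (u t) * u'' t := by
      ext t; ring
    rw [h1, integral_sub (hbd _ continuous_const) hI2, MeasureTheory.integral_const_mul,
      hsum, mul_zero, zero_sub]
  -- RHS of Fubini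
  set c : ℂ := deriv u 0 with hc
  have hG : ∀ s ∈ Ioc (0:ℝ) 1, (∫ t in Ioo (0:ℝ) s, u'' t) = d s - c := by
    intro s hs
    have h1 := hrep s
    rw [intervalIntegral.integral_of_le hs.1.le, integral_Ioc_eq_integral_Ioo] at h1
    rw [h1, add_sub_cancel_left]
  have hR : (∫ s, (∫ t, F t s ∂μ) ∂μ) = ∫ s in Ioc (0:ℝ) 1, (d s - c) * v s := by
    refine integral_congr_ae ?_
    filter_upwards [hmem] with s hs
    have h1 : (fun t => F t s) = (Iio s).indicator (fun t => u'' t * v s) := by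
      ext t
      by_cases h : t < s <;> simp [hF, h, Set.indicator_apply]
    rw [h1, integral_indicator measurableSet_Iio, hμ,
      Measure.restrict_restrict measurableSet_Iio]
    have h2 : Iio s ∩ Ioc 0 1 = Ioo 0 s := by
      ext t
      constructor
      · rintro ⟨h3, h4, _⟩; exact ⟨h4, h3⟩
      · rintro ⟨h3, h4⟩; exact ⟨h4, h3, h4.le.trans hs.2⟩
    rw [h2, MeasureTheory.integral_mul_const, hG s hs]
  set q : ℝ := ∫ s in Ioc (0:ℝ) 1, Complex.normSq (d s) with hq
  have hRval : (∫ s in Ioc (0:ℝ) 1, (d s - c) * v s) = (q : ℂ) := by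
    have h1 : (fun s => (d s - c) * v s)
        = fun s => ((Complex.normSq (d s) : ℝ) : ℂ) - c * v s := by
      ext s
      simp only [hv]
      rw [sub_mul, Complex.mul_conj]
    have hint1 : IntegrableOn (fun s => ((Complex.normSq (d s) : ℝ) : ℂ)) (Ioc (0:ℝ) 1) :=
      (Complex.continuous_ofReal.comp (Complex.continuous_normSq.comp hdc)).integrableOn_Ioc
    have hint2 : IntegrableOn (fun s => c * v s) (Ioc (0:ℝ) 1) :=
      (continuous_const.mul hvc).integrableOn_Ioc
    rw [h1, integral_sub hint1 hint2, MeasureTheory.integral_const_mul]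
    have h2 : (∫ s in Ioc (0:ℝ) 1, v s) = 0 := by
      have h3 : (∫ s in Ioc (0:ℝ) 1, v s) = (starRingEnd ℂ) (∫ s in Ioc (0:ℝ) 1, d s) := by
        simp only [hv]
        exact integral_conj
      rw [h3, hIocd 0 1 zero_le_one, hu10, sub_self, map_zero]
    rw [h2, mul_zero, sub_zero, hq]
    exact integral_ofReal
  have hkey : (∫ t in Ioc (0:ℝ) 1, (starRingEnd ℂ) (u t) * u'' t) = -(q : ℂ) := by
    have h0 := hswap
    rw [hL, hL2, hR, hRval] at h0
    linear_combination -h0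
  -- use the equation
  set r : ℝ := ∫ t in Ioc (0:ℝ) 1, Complex.normSq (u t) * a t with hr
  have heq' : ∀ᵐ t ∂μ, (starRingEnd ℂ) (u t) * u'' t
      = ((ξ : ℂ) * Complex.I) * ((Complex.normSq (u t) * a t : ℝ) : ℂ) := by
    filter_upwards [ae_restrict_of_ae heq] with t ht
    have h2 : u'' t = (ξ : ℂ) * Complex.I * (a t : ℂ) * u t := by linear_combination -ht
    rw [h2]
    have h3 := Complex.mul_conj (u t)
    push_cast
    linear_combination ((ξ : ℂ) * Complex.I * (a t : ℂ)) * h3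
  have hIr : (∫ t in Ioc (0:ℝ) 1, (starRingEnd ℂ) (u t) * u'' t)
      = ((ξ : ℂ) * Complex.I) * (r : ℂ) := by
    rw [show (∫ t in Ioc (0:ℝ) 1, (starRingEnd ℂ) (u t) * u'' t)
        = ∫ t, (starRingEnd ℂ) (u t) * u'' t ∂μ from rfl,
      integral_congr_ae heq', MeasureTheory.integral_const_mul]
    congr 1
    rw [hr]
    exact integral_ofReal
  have hmain : ((ξ : ℂ) * Complex.I) * (r : ℂ) = -(q : ℂ) := hIr.symm.trans hkey
  have hq0 : q = 0 := by
    have h1 := congrArg Complex.re hmain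
    simp [Complex.mul_re, Complex.mul_im] at h1
    linarith
  have hr0 : r = 0 := by
    have h1 := congrArg Complex.im hmain
    simp [Complex.mul_im, Complex.mul_re] at h1
    rcases h1 with h1 | h1
    · exact absurd h1 hξ
    · exact h1
  -- the derivative vanishes
  have hdIoo : ∀ x ∈ Ioo (0:ℝ) 1, d x = 0 := by
    by_contra hcon
    push_neg at hcon
    obtain ⟨x₀, hx₀, hne⟩ := hcon
    set f : ℝ → ℝ := fun s => Complex.normSq (d s) with hf
    have hfc : Continuous f := Complex.continuous_normSq.comp hdc
    have hfnn : 0 ≤ᵐ[volume.restrict (Ioc (0:ℝ) 1)] f :=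
      Filter.Eventually.of_forall fun s => Complex.normSq_nonneg _
    have hfint : IntegrableOn f (Ioc (0:ℝ) 1) := hfc.integrableOn_Ioc
    have hpos : 0 < volume (Function.support f ∩ Ioc (0:ℝ) 1) := by
      have hU : IsOpen (f ⁻¹' (Ioi 0) ∩ Ioo (0:ℝ) 1) :=
        (isOpen_Ioi.preimage hfc).inter isOpen_Ioo
      have hx : x₀ ∈ f ⁻¹' (Ioi 0) ∩ Ioo (0:ℝ) 1 :=
        ⟨by simpa [hf] using Complex.normSq_pos.2 hne, hx₀⟩
      have h1 : 0 < volume (f ⁻¹' (Ioi 0) ∩ Ioo (0:ℝ) 1) :=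
        hU.measure_pos volume ⟨x₀, hx⟩
      refine lt_of_lt_of_le h1 (measure_mono ?_)
      rintro y ⟨h2, h3⟩
      exact ⟨ne_of_gt h2, Ioo_subset_Ioc_self h3⟩
    have h2 := (setIntegral_pos_iff_support_of_nonneg_ae hfnn hfint).2 hpos
    rw [show (∫ s in Ioc (0:ℝ) 1, f s) = q from rfl, hq0] at h2
    exact lt_irrefl 0 h2
  have hdIcc : ∀ x ∈ Icc (0:ℝ) 1, d x = 0 := by
    have h1 : Set.EqOn d 0 (Ioo (0:ℝ) 1) := fun x hx => hdIoo x hx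
    have h2 : Set.EqOn d 0 (closure (Ioo (0:ℝ) 1)) := h1.closure hdc continuous_const
    intro x hx
    rw [← closure_Ioo (zero_ne_one)] at hx
    exact h2 hx
  have hd0 : ∀ x, deriv u x = 0 := by
    intro x
    have hper : Function.Periodic d 1 := hdper
    have h1 : d (x - (⌊x⌋ : ℝ) * 1) = d x := hper.sub_int_mul_eq ⌊x⌋
    have h2 : d x = d (Int.fract x) := by
      rw [← h1]
      congr 1
      rw [Int.fract]
      ring
    rw [show deriv u x = d x from rfl, h2]
    exact hdIcc _ ⟨Int.fract_nonneg x, (Int.fract_lt_one x).le⟩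
  have hconst : ∀ x, u x = u 0 := fun x => is_const_of_deriv_eq_zero hdiff hd0 x 0
  have hrval : r = Complex.normSq (u 0) := by
    have h1 : r = ∫ t in Ioc (0:ℝ) 1, Complex.normSq (u 0) * a t := by
      rw [hr]
      refine integral_congr_ae (Filter.Eventually.of_forall fun t => ?_)
      show Complex.normSq (u t) * a t = Complex.normSq (u 0) * a t
      rw [hconst t]
    rw [h1, MeasureTheory.integral_const_mul, ha1, mul_one]
  have hu0 : u 0 = 0 := by
    have h1 : Complex.normSq (u 0) = 0 := by rw [← hrval]; exact hr0
    exact Complex.normSq_eq_zero.1 h1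
  intro x
  rw [hconst x, hu0]

/-- for `a ∈ 𝒜` and `ξ ≠ 0`, any periodic `W^{2,1}` solution of
`-u'' + iξ a u = 0` vanishes identically; consequently, for any `h ∈ L¹(𝕋)` a
periodic `W^{2,1}` solution of `-u'' + iξ a u = h` is unique. -/
theorem statement_5 (a : ℝ → ℝ) (ha : MemA a) (ξ : ℝ) (hξ : ξ ≠ 0) :
    (∀ u u'' : ℝ → ℂ, IsPeriodicW21 u u'' →
      (∀ᵐ x : ℝ, -u'' x + (ξ : ℂ) * Complex.I * (a x : ℂ) * u x = 0) →
      ∀ x, u x = 0) ∧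
    (∀ h : ℝ → ℂ, (∀ x, h (x + 1) = h x) → IntegrableOn h (Ioc 0 1) →
      ∀ u₁ u₁'' u₂ u₂'' : ℝ → ℂ,
        IsPeriodicW21 u₁ u₁'' → IsPeriodicW21 u₂ u₂'' →
        (∀ᵐ x : ℝ, -u₁'' x + (ξ : ℂ) * Complex.I * (a x : ℂ) * u₁ x = h x) →
        (∀ᵐ x : ℝ, -u₂'' x + (ξ : ℂ) * Complex.I * (a x : ℂ) * u₂ x = h x) →
        ∀ x, u₁ x = u₂ x) := by
  constructor
  · exact fun u u'' hu heq => key_zero a ha ξ hξ u u'' hu heq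
  · intro h hper hintg u₁ u₁'' u₂ u₂'' h1 h2 he1 he2 x
    obtain ⟨p1, p1'', c1, rep1, i1⟩ := h1
    obtain ⟨p2, p2'', c2, rep2, i2⟩ := h2
    have hsub : IsPeriodicW21 (u₁ - u₂) (u₁'' - u₂'') := by
      refine ⟨fun y => by simp [p1 y, p2 y], fun y => by simp [p1'' y, p2'' y],
        c1.sub c2, ?_, i1.sub i2⟩
      intro y
      have d1 : Differentiable ℝ u₁ := c1.differentiable one_ne_zero
      have d2 : Differentiable ℝ u₂ := c2.differentiable one_ne_zero
      have hdu : deriv (u₁ - u₂) y = deriv u₁ y - deriv u₂ y := deriv_fun_sub (d1 y) (d2 y)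
      have hdu0 : deriv (u₁ - u₂) 0 = deriv u₁ 0 - deriv u₂ 0 := deriv_fun_sub (d1 0) (d2 0)
      have hii : (∫ t in (0:ℝ)..y, (u₁'' - u₂'') t)
          = (∫ t in (0:ℝ)..y, u₁'' t) - ∫ t in (0:ℝ)..y, u₂'' t := by
        simp only [Pi.sub_apply]
        exact intervalIntegral.integral_sub
          (periodic_intervalIntegrable p1'' i1 0 y)
          (periodic_intervalIntegrable p2'' i2 0 y)
      rw [hdu, hdu0, rep1 y, rep2 y, hii]
      ring
    have heqz : ∀ᵐ t : ℝ, -(u₁'' - u₂'') t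
        + (ξ : ℂ) * Complex.I * (a t : ℂ) * (u₁ - u₂) t = 0 := by
      filter_upwards [he1, he2] with t ht1 ht2
      simp only [Pi.sub_apply]
      linear_combination ht1 - ht2
    have hz := key_zero a ha ξ hξ _ _ hsub heqz x
    simpa [sub_eq_zero] using hz
end
end

section
/- Let a ∈ 𝒜, ξ ∈ ℝ with ξ ≠ 0, and let f : 𝕋 → ℂ be bounded measurable. If u is a periodic W^{2,1} function with −u'' + iξ a u = a f a.e., then u' ∈ L²(𝕋) (so u ∈ H¹(𝕋)) and ‖u‖_{H¹_a} ≤ (2 / min{1, |ξ|}) [f]_a. -/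
open MeasureTheory Set Complex

noncomputable section

private lemma per_int {g : ℝ → ℂ} (hg : ∀ x, g (x + 1) = g x) (n : ℤ) (x : ℝ) :
    g (x + n) = g x := by
  induction n using Int.induction_on with
  | zero => simp
  | succ k ih =>
      have : x + ((k : ℤ) + 1 : ℤ) = (x + (k : ℤ)) + 1 := by push_cast; ring
      rw [this, hg, ih]
  | pred k ih =>
      have h1 := hg (x + (-(k : ℤ) - 1 : ℤ))
      have : x + (-(k : ℤ) - 1 : ℤ) + 1 = x + (-(k : ℤ) : ℤ) := by push_cast; ring
      rw [this] at h1
      rw [h1] at ih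
      exact ih

private lemma glob_bound {g : ℝ → ℂ} (hg : ∀ x, g (x + 1) = g x) {C : ℝ}
    (hC : ∀ x ∈ Icc (0:ℝ) 1, ‖g x‖ ≤ C) (x : ℝ) : ‖g x‖ ≤ C := by
  have h1 : g (Int.fract x) = g x := by
    have := per_int hg ⌊x⌋ (Int.fract x)
    rw [show (Int.fract x) + (⌊x⌋ : ℝ) = x by rw [add_comm]; exact Int.floor_add_fract x] at this; exact this.symm
  rw [← h1]
  exact hC _ ⟨Int.fract_nonneg x, (Int.fract_lt_one x).le⟩

/-- The seminorm `[f]_a = (∫ a |f|²)^{1/2}`. -/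
def seminormA (a : ℝ → ℝ) (f : ℝ → ℂ) : ℝ :=
  Real.sqrt (∫ x in Ioc (0:ℝ) 1, a x * ‖f x‖ ^ 2)

set_option maxHeartbeats 2000000 in
/-- for `a ∈ 𝒜`, `ξ ≠ 0` and `f : 𝕋 → ℂ` bounded measurable, any
periodic `W^{2,1}` solution of `-u'' + iξ a u = a f` satisfies `u' ∈ L²(𝕋)`
(so `u ∈ H¹(𝕋)`) and `‖u‖_{H¹_a} ≤ (2 / min 1 |ξ|) [f]_a`. -/
theorem statement_7 (a : ℝ → ℝ) (ha : MemA a) (ξ : ℝ) (hξ : ξ ≠ 0)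
    (f : ℝ → ℂ) (hf_per : ∀ x, f (x + 1) = f x) (hf_meas : Measurable f)
    (hf_bdd : ∃ M, ∀ x, ‖f x‖ ≤ M)
    (u u'' : ℝ → ℂ) (hu : IsPeriodicW21 u u'')
    (heq : ∀ᵐ x : ℝ,
      -u'' x + (ξ : ℂ) * Complex.I * (a x : ℂ) * u x = (a x : ℂ) * f x) :
    MemLp (deriv u) 2 (volume.restrict (Ioc (0:ℝ) 1)) ∧
    Real.sqrt ((∫ x in Ioc (0:ℝ) 1, ‖deriv u x‖ ^ 2)
        + (∫ x in Ioc (0:ℝ) 1, a x * ‖u x‖ ^ 2))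
      ≤ (2 / min 1 |ξ|) * seminormA a f := by
  obtain ⟨ha_meas, ha_per, ha_nn, ha_int, ha_one⟩ := ha
  obtain ⟨hu_per, hu''_per, huC1, hu_ftc, hu''_int⟩ := hu
  unfold seminormA
  set μ := volume.restrict (Ioc (0:ℝ) 1) with hμdef
  set D := deriv u with hDdef
  have hu_cont : Continuous u := huC1.continuous
  have hD_cont : Continuous D := huC1.continuous_deriv le_rfl
  have hD_per : ∀ x, D (x + 1) = D x := by
    intro x
    have h1 : deriv (fun y => u (y + 1)) x = deriv u (x + 1) := deriv_comp_add_const u 1 x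
    have h2 : (fun y => u (y + 1)) = u := funext hu_per
    rw [h2] at h1
    exact h1.symm
  obtain ⟨Cu, hCu⟩ := (isCompact_Icc (a := (0:ℝ)) (b := 1)).exists_bound_of_continuousOn
    hu_cont.continuousOn
  obtain ⟨CD, hCD⟩ := (isCompact_Icc (a := (0:ℝ)) (b := 1)).exists_bound_of_continuousOn
    hD_cont.continuousOn
  have hu_glob : ∀ x, ‖u x‖ ≤ Cu := glob_bound hu_per hCu
  have hD_glob : ∀ x, ‖D x‖ ≤ CD := glob_bound hD_per hCD
  have hu10 : u 1 = u 0 := by simpa using hu_per 0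
  have hD10 : D 1 = D 0 := by simpa using hD_per 0
  have hu_ftc1 : ∀ t : ℝ, ∫ s in (0:ℝ)..t, D s = u t - u 0 := fun t =>
    intervalIntegral.integral_deriv_eq_sub
      (fun x _ => (huC1.differentiable one_ne_zero).differentiableAt)
      (hD_cont.intervalIntegrable _ _)
  have hD_int0 : ∫ x in Ioc (0:ℝ) 1, D x = 0 := by
    have h := hu_ftc1 1
    rw [intervalIntegral.integral_of_le zero_le_one] at h
    rw [h, hu10, sub_self]
  have hu''II : ∀ s t : ℝ, s ∈ Icc (0:ℝ) 1 → t ∈ Icc (0:ℝ) 1 →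
      IntervalIntegrable u'' volume s t := by
    intro s t hs ht
    have h01 : IntervalIntegrable u'' volume 0 1 := by
      rw [intervalIntegrable_iff_integrableOn_Ioc_of_le zero_le_one]; exact hu''_int
    exact h01.mono_set (by rw [uIcc_of_le zero_le_one]; exact uIcc_subset_Icc hs ht)
  have hu''0 : ∫ t in (0:ℝ)..1, u'' t = 0 := by
    have h := hu_ftc 1
    rw [hD10] at h
    exact (left_eq_add.mp h)
  have hint_s1 : ∀ s ∈ Icc (0:ℝ) 1, ∫ t in s..(1:ℝ), u'' t = D 1 - D s := by
    intro s hs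
    have hadd : (∫ t in (0:ℝ)..s, u'' t) + ∫ t in s..(1:ℝ), u'' t = ∫ t in (0:ℝ)..1, u'' t :=
      intervalIntegral.integral_add_adjacent_intervals
        (hu''II 0 s ⟨le_rfl, zero_le_one⟩ hs) (hu''II s 1 hs ⟨zero_le_one, le_rfl⟩)
    have h2 := hu_ftc s
    rw [hu''0] at hadd
    have h3 : ∫ t in (0:ℝ)..s, u'' t = D s - D 0 := by rw [h2]; ring
    rw [h3] at hadd
    rw [hD10]
    linear_combination hadd
  haveI : IsFiniteMeasure μ := by
    refine ⟨?_⟩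
    rw [hμdef, Measure.restrict_apply_univ]
    simp [Real.volume_Ioc]
  have hCD0 : 0 ≤ CD := le_trans (norm_nonneg _) (hD_glob 0)
  have hCu0 : 0 ≤ Cu := le_trans (norm_nonneg _) (hu_glob 0)
  have hIocIcc : Ioc (0:ℝ) 1 ⊆ Icc 0 1 := Ioc_subset_Icc_self
  set G : ℝ × ℝ → ℂ := fun p => Set.indicator {q : ℝ × ℝ | q.2 ≤ q.1}
    (fun q => u'' q.1 * (starRingEnd ℂ) (D q.2)) p with hGdef
  have hu''μ : Integrable u'' μ := hu''_int
  have hset : MeasurableSet {q : ℝ × ℝ | q.2 ≤ q.1} :=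
    measurableSet_le measurable_snd measurable_fst
  have hGmeas : AEStronglyMeasurable G (μ.prod μ) := by
    apply AEStronglyMeasurable.indicator _ hset
    exact (hu''μ.aestronglyMeasurable.comp_fst).mul
      ((Complex.continuous_conj.comp (hD_cont.comp continuous_snd)).aestronglyMeasurable)
  have hGint : Integrable G (μ.prod μ) := by
    refine ((hu''μ.norm.mul_prod (integrable_const CD)).mono' hGmeas ?_)
    refine ae_of_all _ fun p => ?_
    show ‖G p‖ ≤ ‖u'' p.1‖ * CD
    by_cases h : p ∈ {q : ℝ × ℝ | q.2 ≤ q.1}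
    · rw [show G p = u'' p.1 * (starRingEnd ℂ) (D p.2) from Set.indicator_of_mem h _, norm_mul]
      have h2 : ‖(starRingEnd ℂ) (D p.2)‖ ≤ CD := by
        rw [RCLike.norm_conj]; exact hD_glob p.2
      exact mul_le_mul_of_nonneg_left h2 (norm_nonneg _)
    · rw [show G p = 0 from Set.indicator_of_notMem h _]
      simp only [norm_zero]
      positivity
  have hswap : ∫ t, (∫ s, G (t, s) ∂μ) ∂μ = ∫ s, (∫ t, G (t, s) ∂μ) ∂μ :=
    integral_integral_swap hGint
  have hconj_u_meas : AEStronglyMeasurable (fun x => (starRingEnd ℂ) (u x)) μ :=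
    (Complex.continuous_conj.comp hu_cont).aestronglyMeasurable
  have g1 : Integrable (fun x => u'' x * (starRingEnd ℂ) (u x)) μ := by
    have h := hu''μ.bdd_mul (c := Cu) hconj_u_meas
      (ae_of_all _ fun x => by rw [RCLike.norm_conj]; exact hu_glob x)
    exact h.congr (ae_of_all _ fun x => mul_comm _ _)
  have hL : ∫ t, (∫ s, G (t, s) ∂μ) ∂μ = ∫ t, u'' t * (starRingEnd ℂ) (u t) ∂μ := by
    have hptw : ∀ t ∈ Ioc (0:ℝ) 1,
        (∫ s, G (t, s) ∂μ) = u'' t * (starRingEnd ℂ) (u t - u 0) := by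
      intro t ht
      have h1 : (fun s => G (t, s))
          = Set.indicator (Iic t) (fun s => u'' t * (starRingEnd ℂ) (D s)) := by
        funext s
        simp only [hGdef, Set.indicator_apply, Set.mem_setOf_eq, Set.mem_Iic]
      rw [h1, integral_indicator measurableSet_Iic, hμdef,
        Measure.restrict_restrict measurableSet_Iic]
      have h2 : Iic t ∩ Ioc 0 1 = Ioc 0 t := by
        ext y; simp only [mem_inter_iff, mem_Iic, mem_Ioc]
        constructor
        · rintro ⟨h, h0, _⟩; exact ⟨h0, h⟩
        · rintro ⟨h0, h'⟩; exact ⟨h', h0, h'.trans ht.2⟩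
      rw [h2, integral_const_mul, integral_conj]
      congr 1
      rw [← intervalIntegral.integral_of_le ht.1.le, hu_ftc1 t]
    calc ∫ t, (∫ s, G (t, s) ∂μ) ∂μ = ∫ t, u'' t * (starRingEnd ℂ) (u t - u 0) ∂μ := by
          rw [hμdef]; exact setIntegral_congr_fun measurableSet_Ioc hptw
      _ = ∫ t, (u'' t * (starRingEnd ℂ) (u t) - u'' t * (starRingEnd ℂ) (u 0)) ∂μ := by
          congr 1; funext t; rw [map_sub]; ring
      _ = (∫ t, u'' t * (starRingEnd ℂ) (u t) ∂μ)
            - (∫ t, u'' t ∂μ) * (starRingEnd ℂ) (u 0) := by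
          rw [integral_sub g1 (hu''μ.mul_const _), integral_mul_const]
      _ = ∫ t, u'' t * (starRingEnd ℂ) (u t) ∂μ := by
          have h0 : ∫ t, u'' t ∂μ = 0 := by
            rw [hμdef, ← intervalIntegral.integral_of_le zero_le_one]; exact hu''0
          rw [h0]; ring
  have hDconj_int : Integrable (fun s => (starRingEnd ℂ) (D s)) μ :=
    (Complex.continuous_conj.comp hD_cont).integrableOn_Ioc
  have hDD_int : Integrable (fun s => D s * (starRingEnd ℂ) (D s)) μ :=
    (hD_cont.mul (Complex.continuous_conj.comp hD_cont)).integrableOn_Ioc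
  have hR : ∫ s, (∫ t, G (t, s) ∂μ) ∂μ = -((∫ x, ‖D x‖^2 ∂μ : ℝ) : ℂ) := by
    have hptw : ∀ s ∈ Ioc (0:ℝ) 1,
        (∫ t, G (t, s) ∂μ) = (D 1 - D s) * (starRingEnd ℂ) (D s) := by
      intro s hs
      have h1 : (fun t => G (t, s))
          = Set.indicator (Ici s) (fun t => u'' t * (starRingEnd ℂ) (D s)) := by
        funext t
        simp only [hGdef, Set.indicator_apply, Set.mem_setOf_eq, Set.mem_Ici]
      rw [h1, integral_indicator measurableSet_Ici, hμdef,
        Measure.restrict_restrict measurableSet_Ici]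
      have h2 : Ici s ∩ Ioc 0 1 = Icc s 1 := by
        ext y; simp only [mem_inter_iff, mem_Ici, mem_Ioc, mem_Icc]
        constructor
        · rintro ⟨h, _, h1'⟩; exact ⟨h, h1'⟩
        · rintro ⟨h, h1'⟩; exact ⟨h, lt_of_lt_of_le hs.1 h, h1'⟩
      rw [h2, integral_Icc_eq_integral_Ioc, integral_mul_const,
        ← intervalIntegral.integral_of_le hs.2, hint_s1 s (hIocIcc hs)]
    calc ∫ s, (∫ t, G (t, s) ∂μ) ∂μ = ∫ s, (D 1 - D s) * (starRingEnd ℂ) (D s) ∂μ := by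
          rw [hμdef]; exact setIntegral_congr_fun measurableSet_Ioc hptw
      _ = (D 1) * (∫ s, (starRingEnd ℂ) (D s) ∂μ) - ∫ s, D s * (starRingEnd ℂ) (D s) ∂μ := by
          rw [← integral_const_mul, ← integral_sub (hDconj_int.const_mul _) hDD_int]
          congr 1; funext s; ring
      _ = -((∫ x, ‖D x‖^2 ∂μ : ℝ) : ℂ) := by
          rw [integral_conj]
          have h0 : ∫ s, D s ∂μ = 0 := hD_int0
          rw [h0, map_zero, mul_zero, zero_sub]
          congr 1
          have hptw2 : (fun s => D s * (starRingEnd ℂ) (D s))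
              = fun s => ((‖D s‖^2 : ℝ) : ℂ) := by
            funext s
            rw [RCLike.mul_conj]
            norm_cast
          rw [hptw2]
          exact integral_ofReal
  have hI2 : ∫ t, u'' t * (starRingEnd ℂ) (u t) ∂μ
      = -((∫ x, ‖D x‖^2 ∂μ : ℝ) : ℂ) := by
    rw [← hL, hswap, hR]
  obtain ⟨M, hM⟩ := hf_bdd
  have hM0 : 0 ≤ M := le_trans (norm_nonneg _) (hM 0)
  have ha_nnμ : ∀ᵐ x ∂μ, 0 ≤ a x := ae_restrict_of_ae ha_nn
  have haμ : Integrable a μ := ha_int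
  set m := min 1 |ξ| with hmdef
  have hm : 0 < m := lt_min one_pos (abs_pos.mpr hξ)
  set ε := 2 / m with hεdef
  set δ := m / 2 with hδdef
  have hε : 0 < ε := by positivity
  have hδ : 0 < δ := by positivity
  have hεδ : ε * δ = 1 := by rw [hεdef, hδdef]; field_simp
  have h2δ : 2 * δ = m := by rw [hδdef]; ring
  set K := ∫ x, ‖D x‖^2 ∂μ with hKdef
  set U2 := ∫ x, a x * ‖u x‖^2 ∂μ with hU2def
  set F2 := ∫ x, a x * ‖f x‖^2 ∂μ with hF2def
  set P := ∫ x, (a x : ℂ) * f x * (starRingEnd ℂ) (u x) ∂μ with hPdef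
  have h_au2 : Integrable (fun x => a x * ‖u x‖^2) μ := by
    refine (haμ.const_mul (Cu^2)).mono'
      ((ha_meas.mul (hu_cont.norm.pow 2).measurable).aestronglyMeasurable) ?_
    filter_upwards [ha_nnμ] with x h0
    rw [_root_.Real.norm_eq_abs, _root_.abs_of_nonneg (mul_nonneg h0 (sq_nonneg _))]
    have h1 : ‖u x‖^2 ≤ Cu^2 := by nlinarith [norm_nonneg (u x), hu_glob x]
    nlinarith [mul_nonneg h0 (sub_nonneg.mpr h1)]
  have h_af2 : Integrable (fun x => a x * ‖f x‖^2) μ := by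
    refine (haμ.const_mul (M^2)).mono'
      ((ha_meas.mul (hf_meas.norm.pow_const 2)).aestronglyMeasurable) ?_
    filter_upwards [ha_nnμ] with x h0
    rw [_root_.Real.norm_eq_abs, _root_.abs_of_nonneg (mul_nonneg h0 (sq_nonneg _))]
    have h1 : ‖f x‖^2 ≤ M^2 := by nlinarith [norm_nonneg (f x), hM x]
    nlinarith [mul_nonneg h0 (sub_nonneg.mpr h1)]
  have h_afu : Integrable (fun x => a x * (‖f x‖ * ‖u x‖)) μ := by
    refine (haμ.const_mul (M * Cu)).mono'
      ((ha_meas.mul (hf_meas.norm.mul hu_cont.norm.measurable)).aestronglyMeasurable) ?_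
    filter_upwards [ha_nnμ] with x h0
    rw [_root_.Real.norm_eq_abs, _root_.abs_of_nonneg (mul_nonneg h0 (mul_nonneg (norm_nonneg _) (norm_nonneg _)))]
    have h1 : ‖f x‖ * ‖u x‖ ≤ M * Cu :=
      mul_le_mul (hM x) (hu_glob x) (norm_nonneg _) hM0
    nlinarith [mul_nonneg h0 (sub_nonneg.mpr h1)]
  have g2 : Integrable (fun x => ((ξ:ℂ) * Complex.I) * ((a x * ‖u x‖^2 : ℝ) : ℂ)) μ :=
    h_au2.ofReal.const_mul _
  have g3 : Integrable (fun x => (a x : ℂ) * f x * (starRingEnd ℂ) (u x)) μ := by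
    refine (haμ.const_mul (M * Cu)).mono'
      ((((Complex.measurable_ofReal.comp ha_meas).mul hf_meas).aestronglyMeasurable).mul
        hconj_u_meas) ?_
    filter_upwards [ha_nnμ] with x h0
    rw [norm_mul, norm_mul, RCLike.norm_conj, Complex.norm_real, _root_.Real.norm_eq_abs,
      _root_.abs_of_nonneg h0]
    have h1 : ‖f x‖ * ‖u x‖ ≤ M * Cu :=
      mul_le_mul (hM x) (hu_glob x) (norm_nonneg _) hM0
    nlinarith [mul_nonneg h0 (sub_nonneg.mpr h1)]
  have hmulae : ∀ᵐ x ∂μ,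
      -(u'' x * (starRingEnd ℂ) (u x)) + ((ξ:ℂ) * Complex.I) * ((a x * ‖u x‖^2 : ℝ) : ℂ)
        = (a x : ℂ) * f x * (starRingEnd ℂ) (u x) := by
    filter_upwards [ae_restrict_of_ae heq] with x hx
    have h2 : u x * (starRingEnd ℂ) (u x) = ((‖u x‖^2 : ℝ) : ℂ) := by
      rw [RCLike.mul_conj]; norm_cast
    have h3 : ((a x * ‖u x‖^2 : ℝ) : ℂ) = (a x : ℂ) * (u x * (starRingEnd ℂ) (u x)) := by
      rw [h2]; push_cast; ring
    rw [h3]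
    calc -(u'' x * (starRingEnd ℂ) (u x))
          + ((ξ:ℂ) * Complex.I) * ((a x : ℂ) * (u x * (starRingEnd ℂ) (u x)))
        = (-u'' x + (ξ:ℂ) * Complex.I * (a x : ℂ) * u x) * (starRingEnd ℂ) (u x) := by ring
      _ = ((a x : ℂ) * f x) * (starRingEnd ℂ) (u x) := by rw [hx]
      _ = _ := by ring
  have hofU2 : ∫ x, ((a x * ‖u x‖^2 : ℝ) : ℂ) ∂μ = ((U2 : ℝ) : ℂ) := integral_ofReal
  have hmain : ((K : ℝ) : ℂ) + ((ξ:ℂ) * Complex.I) * ((U2 : ℝ) : ℂ) = P := by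
    have h := integral_congr_ae hmulae
    have hadd : ∫ x, (-(u'' x * (starRingEnd ℂ) (u x))
        + ((ξ:ℂ) * Complex.I) * ((a x * ‖u x‖^2 : ℝ) : ℂ)) ∂μ
        = (∫ x, -(u'' x * (starRingEnd ℂ) (u x)) ∂μ)
          + ∫ x, ((ξ:ℂ) * Complex.I) * ((a x * ‖u x‖^2 : ℝ) : ℂ) ∂μ :=
      integral_add g1.neg g2
    rw [hadd, integral_neg, hI2, neg_neg, integral_const_mul, hofU2] at h
    exact h
  have hre : K = P.re := by
    have h := congrArg Complex.re hmain
    simpa using h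
  have him : ξ * U2 = P.im := by
    have h := congrArg Complex.im hmain
    simpa using h
  have hPn : ‖P‖ ≤ ∫ x, a x * (‖f x‖ * ‖u x‖) ∂μ := by
    refine le_trans (norm_integral_le_integral_norm _) (le_of_eq (integral_congr_ae ?_))
    filter_upwards [ha_nnμ] with x h0
    rw [norm_mul, norm_mul, RCLike.norm_conj, Complex.norm_real, _root_.Real.norm_eq_abs,
      _root_.abs_of_nonneg h0, mul_assoc]
  have key : 2 * ∫ x, a x * (‖f x‖ * ‖u x‖) ∂μ ≤ ε * F2 + δ * U2 := by
    have hle : ∀ᵐ x ∂μ, 2 * (a x * (‖f x‖ * ‖u x‖))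
        ≤ ε * (a x * ‖f x‖^2) + δ * (a x * ‖u x‖^2) := by
      filter_upwards [ha_nnμ] with x h0
      have h1 : 0 ≤ (a x) * ε * (‖f x‖ - δ * ‖u x‖)^2 := by positivity
      have h2 : (a x) * ε * (‖f x‖ - δ * ‖u x‖)^2
          = ε * (a x * ‖f x‖^2) - 2 * (ε * δ) * (a x * (‖f x‖ * ‖u x‖))
            + (ε * δ) * δ * (a x * ‖u x‖^2) := by ring
      rw [hεδ] at h2
      linarith [h1, h2]
    have h := integral_mono_ae (h_afu.const_mul 2)
      ((h_af2.const_mul ε).add (h_au2.const_mul δ)) hle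
    rw [integral_const_mul] at h
    simp only [Pi.add_apply] at h
    simp only [integral_add (h_af2.const_mul ε) (h_au2.const_mul δ), integral_const_mul] at h
    exact h
  have hK0 : 0 ≤ K := integral_nonneg fun x => sq_nonneg _
  have hU20 : 0 ≤ U2 := integral_nonneg_of_ae (by
    filter_upwards [ha_nnμ] with x h0; positivity)
  have hF20 : 0 ≤ F2 := integral_nonneg_of_ae (by
    filter_upwards [ha_nnμ] with x h0; positivity)
  have hKP : K ≤ ‖P‖ := by
    rw [hre]
    exact (Complex.re_le_norm P)
  have hUP : |ξ| * U2 ≤ ‖P‖ := by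
    have h := Complex.abs_im_le_norm P
    rw [← him, abs_mul, _root_.abs_of_nonneg hU20] at h
    exact h
  have hmle1 : m ≤ 1 := min_le_left _ _
  have hmleξ : m ≤ |ξ| := min_le_right _ _
  clear_value m ε δ K U2 F2 P
  have step1 : m * (K + U2) ≤ ε * F2 + δ * (K + U2) := by
    have e1 : m * K ≤ 1 * K := mul_le_mul_of_nonneg_right hmle1 hK0
    have e2 : m * U2 ≤ |ξ| * U2 := mul_le_mul_of_nonneg_right hmleξ hU20
    have e3 : 0 ≤ δ * K := mul_nonneg hδ.le hK0
    linarith [hKP, hUP, hPn, key]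
  have step2 : δ * (K + U2) ≤ ε * F2 := by
    have e1 : m * (K + U2) = 2 * (δ * (K + U2)) := by rw [← h2δ]; ring
    linarith [step1]
  have hX : K + U2 ≤ ε^2 * F2 := by
    have e1 := mul_le_mul_of_nonneg_left step2 hε.le
    have e2 : ε * (δ * (K + U2)) = K + U2 := by rw [← mul_assoc, hεδ, one_mul]
    have e3 : ε * (ε * F2) = ε^2 * F2 := by ring
    linarith [e1]
  refine ⟨?_, ?_⟩
  · exact (memLp_top_of_bound hD_cont.aestronglyMeasurable CD
      (ae_of_all _ hD_glob)).mono_exponent le_top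
  · have h1 : Real.sqrt (K + U2) ≤ Real.sqrt (ε^2 * F2) := Real.sqrt_le_sqrt hX
    rw [Real.sqrt_mul (sq_nonneg ε), Real.sqrt_sq hε.le] at h1
    exact h1
end
end

section
/- Let a ∈ 𝒜, ξ ∈ ℝ with ξ ≠ 0, and let f : 𝕋 → ℂ be bounded measurable with ∫ a f = 0. If u is a periodic W^{2,1} function with −u'' + iξ a u = a f a.e., then ‖u‖_∞ ≤ 2 [f]_a, where ‖u‖_∞ = max_{x∈𝕋} |u(x)|. -/
open MeasureTheory Set Complex

noncomputable section

lemma cs_integral {μ : Measure ℝ} {g h : ℝ → ℝ}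
    (hg2 : Integrable (fun x => g x ^ 2) μ) (hh2 : Integrable (fun x => h x ^ 2) μ)
    (hgh : Integrable (fun x => g x * h x) μ) :
    ∫ x, g x * h x ∂μ ≤ Real.sqrt (∫ x, g x ^ 2 ∂μ) * Real.sqrt (∫ x, h x ^ 2 ∂μ) := by
  set A := ∫ x, g x ^ 2 ∂μ
  set B := ∫ x, g x * h x ∂μ
  set C := ∫ x, h x ^ 2 ∂μ
  have hA : 0 ≤ A := integral_nonneg fun x => sq_nonneg _
  have hC : 0 ≤ C := integral_nonneg fun x => sq_nonneg _
  have key : ∀ t : ℝ, 0 ≤ A * (t * t) + (2 * B) * t + C := by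
    intro t
    have h1 : ∀ x, (0:ℝ) ≤ (t * g x + h x) ^ 2 := fun x => sq_nonneg _
    have h2 : ∫ x, (t * g x + h x) ^ 2 ∂μ = A * (t * t) + (2 * B) * t + C := by
      have : (fun x => (t * g x + h x) ^ 2)
          = fun x => t * t * g x ^ 2 + 2 * t * (g x * h x) + h x ^ 2 := by
        funext x; ring
      have hf1 : Integrable (fun x => t * t * g x ^ 2 + 2 * t * (g x * h x)) μ :=
        (hg2.const_mul (t*t)).add (hgh.const_mul (2*t))
      rw [this, integral_add hf1 hh2,
        integral_add (hg2.const_mul (t*t)) (hgh.const_mul (2*t)),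
        integral_const_mul, integral_const_mul]
      ring
    rw [← h2]
    exact integral_nonneg h1
  have hd := discrim_le_zero key
  rw [discrim] at hd
  have hB2 : B ^ 2 ≤ A * C := by nlinarith
  calc B ≤ |B| := le_abs_self _
    _ = Real.sqrt (B ^ 2) := (Real.sqrt_sq_eq_abs _).symm
    _ ≤ Real.sqrt (A * C) := Real.sqrt_le_sqrt hB2
    _ = Real.sqrt A * Real.sqrt C := Real.sqrt_mul hA _

/-- for `a ∈ 𝒜`, `ξ ≠ 0` and `f : 𝕋 → ℂ` bounded measurable with
`∫ a f = 0`, any periodic `W^{2,1}` solution of `-u'' + iξ a u = a f` satisfies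
`‖u‖_∞ ≤ 2 [f]_a`.  (The sup-norm bound is expressed pointwise.) -/
theorem statement_8 (a : ℝ → ℝ) (ha : MemA a) (ξ : ℝ) (hξ : ξ ≠ 0)
    (f : ℝ → ℂ) (hf_per : ∀ x, f (x + 1) = f x) (hf_meas : Measurable f)
    (hf_bdd : ∃ M, ∀ x, ‖f x‖ ≤ M)
    (hf_mean : (∫ x in Ioc (0:ℝ) 1, (a x : ℂ) * f x) = 0)
    (u u'' : ℝ → ℂ) (hu : IsPeriodicW21 u u'')
    (heq : ∀ᵐ x : ℝ,
      -u'' x + (ξ : ℂ) * Complex.I * (a x : ℂ) * u x = (a x : ℂ) * f x) :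
    ∀ x, ‖u x‖ ≤ 2 * seminormA a f := by
  obtain ⟨ha_meas, ha_per, ha_nonneg, ha_int, ha_one⟩ := ha
  obtain ⟨hu_per, hu''_per, hu_C1, hFTC, hu''_int⟩ := hu
  obtain ⟨M, hM⟩ := hf_bdd
  set w := deriv u with hwdef
  have hu_cont : Continuous u := hu_C1.continuous
  have hw_cont : Continuous w := hu_C1.continuous_deriv le_rfl
  have hu_diff : ∀ x, HasDerivAt u (w x) x := fun x =>
    ((hu_C1.differentiable one_ne_zero) x).hasDerivAt
  have hw_per : ∀ x, w (x + 1) = w x := by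
    intro x
    have h1 : deriv (fun y => u (y + 1)) x = deriv u (x + 1) :=
      deriv_comp_add_const u 1 x
    have h2 : (fun y => u (y + 1)) = u := funext hu_per
    rw [h2] at h1
    exact h1.symm
  have hFTCu : ∀ s t : ℝ, (∫ x in s..t, w x) = u t - u s := fun s t =>
    intervalIntegral.integral_deriv_eq_sub (fun x _ => (hu_diff x).differentiableAt)
      (hw_cont.intervalIntegrable s t)
  have hu10 : u 1 = u 0 := by simpa using hu_per 0
  have hw10 : w 1 = w 0 := by simpa using hw_per 0
  have hu''0 : (∫ t in (0:ℝ)..1, u'' t) = 0 := by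
    have h := hFTC 1
    rw [hw10] at h
    linear_combination -h
  have hu''Ioc : (∫ t in Ioc (0:ℝ) 1, u'' t) = 0 := by
    rw [← intervalIntegral.integral_of_le zero_le_one]
    exact hu''0
  -- bound for u
  obtain ⟨Mu, hMu⟩ : ∃ Mu : ℝ, ∀ x, ‖u x‖ ≤ Mu := by
    obtain ⟨C, hC⟩ := (isCompact_Icc (a := (0:ℝ)) (b := 1)).exists_bound_of_continuousOn
      hu_cont.continuousOn
    refine ⟨C, fun x => ?_⟩
    have hper : Function.Periodic u 1 := hu_per
    have : u x = u (Int.fract x) := by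
      have h3 := hper.sub_int_mul_eq (x := x) ⌊x⌋
      rw [mul_one] at h3
      rw [Int.fract]
      exact h3.symm
    rw [this]
    exact hC _ ⟨Int.fract_nonneg x, (Int.fract_lt_one x).le⟩
  -- integrabilities on Ioc 0 1
  have haC : Integrable (fun x => (a x : ℂ)) (volume.restrict (Ioc 0 1)) := ha_int.ofReal
  have hu_aesm : AEStronglyMeasurable u (volume.restrict (Ioc (0:ℝ) 1)) :=
    hu_cont.aestronglyMeasurable
  have hau : Integrable (fun x => (a x : ℂ) * u x) (volume.restrict (Ioc 0 1)) := by
    have := haC.bdd_mul hu_aesm (Filter.Eventually.of_forall hMu)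
    simpa [mul_comm] using this
  have hconj_u_cont : Continuous (fun x => (starRingEnd ℂ) (u x)) := by
    exact continuous_star.comp hu_cont
  have hafu : Integrable (fun x => (a x : ℂ) * f x * (starRingEnd ℂ) (u x))
      (volume.restrict (Ioc 0 1)) := by
    have hb : AEStronglyMeasurable (fun x => f x * (starRingEnd ℂ) (u x))
        (volume.restrict (Ioc (0:ℝ) 1)) :=
      hf_meas.aestronglyMeasurable.mul hconj_u_cont.aestronglyMeasurable
    have hbdd : ∃ C, ∀ x, ‖f x * (starRingEnd ℂ) (u x)‖ ≤ C := by
      refine ⟨M * Mu, fun x => ?_⟩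
      rw [norm_mul, RCLike.norm_conj]
      exact mul_le_mul (hM x) (hMu x) (norm_nonneg _)
        ((norm_nonneg _).trans (hM 0))
    exact (haC.bdd_mul hb (Filter.Eventually.of_forall hbdd.choose_spec)).congr (Filter.Eventually.of_forall fun x => by ring)
  -- real integrabilities
  have hMu0 : 0 ≤ Mu := (norm_nonneg _).trans (hMu 0)
  have hM0 : 0 ≤ M := (norm_nonneg _).trans (hM 0)
  have hau2 : Integrable (fun x => a x * ‖u x‖ ^ 2) (volume.restrict (Ioc 0 1)) := by
    have hb : AEStronglyMeasurable (fun x => ‖u x‖ ^ 2) (volume.restrict (Ioc (0:ℝ) 1)) :=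
      ((hu_cont.norm.pow 2)).aestronglyMeasurable
    have hbdd : ∃ C, ∀ x, ‖‖u x‖ ^ 2‖ ≤ C := by
      refine ⟨Mu ^ 2, fun x => ?_⟩
      rw [Real.norm_eq_abs, _root_.abs_of_nonneg (by positivity)]
      exact pow_le_pow_left₀ (norm_nonneg _) (hMu x) 2
    exact (ha_int.bdd_mul hb (Filter.Eventually.of_forall hbdd.choose_spec)).congr (Filter.Eventually.of_forall fun x => by ring)
  have haf2 : Integrable (fun x => a x * ‖f x‖ ^ 2) (volume.restrict (Ioc 0 1)) := by
    have hb : AEStronglyMeasurable (fun x => ‖f x‖ ^ 2) (volume.restrict (Ioc (0:ℝ) 1)) :=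
      ((hf_meas.norm.pow_const 2)).aestronglyMeasurable
    have hbdd : ∃ C, ∀ x, ‖‖f x‖ ^ 2‖ ≤ C := by
      refine ⟨M ^ 2, fun x => ?_⟩
      rw [Real.norm_eq_abs, _root_.abs_of_nonneg (by positivity)]
      exact pow_le_pow_left₀ (norm_nonneg _) (hM x) 2
    exact (ha_int.bdd_mul hb (Filter.Eventually.of_forall hbdd.choose_spec)).congr (Filter.Eventually.of_forall fun x => by ring)
  have hafu_r : Integrable (fun x => a x * (‖f x‖ * ‖u x‖)) (volume.restrict (Ioc 0 1)) := by
    have hb : AEStronglyMeasurable (fun x => ‖f x‖ * ‖u x‖) (volume.restrict (Ioc (0:ℝ) 1)) :=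
      (hf_meas.norm.aestronglyMeasurable.mul hu_cont.norm.aestronglyMeasurable)
    have hbdd : ∃ C, ∀ x, ‖‖f x‖ * ‖u x‖‖ ≤ C := by
      refine ⟨M * Mu, fun x => ?_⟩
      rw [Real.norm_eq_abs, _root_.abs_of_nonneg (by positivity)]
      exact mul_le_mul (hM x) (hMu x) (norm_nonneg _) hM0
    exact (ha_int.bdd_mul hb (Filter.Eventually.of_forall hbdd.choose_spec)).congr (Filter.Eventually.of_forall fun x => by ring)
  have hw_int : IntegrableOn w (Ioc (0:ℝ) 1) := hw_cont.integrableOn_Ioc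
  have hwn_int : IntegrableOn (fun x => ‖w x‖) (Ioc (0:ℝ) 1) := hw_int.norm
  have hwn2_int : IntegrableOn (fun x => ‖w x‖ ^ 2) (Ioc (0:ℝ) 1) :=
    (hw_cont.norm.pow 2).integrableOn_Ioc
  have hu''u : Integrable (fun x => u'' x * (starRingEnd ℂ) (u x))
      (volume.restrict (Ioc 0 1)) := by
    have hbdd : ∃ C, ∀ x, ‖(starRingEnd ℂ) (u x)‖ ≤ C :=
      ⟨Mu, fun x => by rw [RCLike.norm_conj]; exact hMu x⟩
    exact (hu''_int.bdd_mul hconj_u_cont.aestronglyMeasurable (Filter.Eventually.of_forall hbdd.choose_spec)).congr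
      (Filter.Eventually.of_forall fun x => by ring)
  -- Step B : ∫ a u = 0
  have hau0 : (∫ x in Ioc (0:ℝ) 1, (a x : ℂ) * u x) = 0 := by
    have hcongr : (∫ x in Ioc (0:ℝ) 1, (-u'' x + (ξ : ℂ) * Complex.I * (a x : ℂ) * u x))
        = ∫ x in Ioc (0:ℝ) 1, (a x : ℂ) * f x :=
      integral_congr_ae (ae_restrict_of_ae heq)
    have hI1 : Integrable (fun x => -u'' x) (volume.restrict (Ioc 0 1)) := hu''_int.neg
    have hI2 : Integrable (fun x => ((ξ : ℂ) * Complex.I) * ((a x : ℂ) * u x))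
        (volume.restrict (Ioc 0 1)) := hau.const_mul _
    have hsplit : (∫ x in Ioc (0:ℝ) 1, (-u'' x + (ξ : ℂ) * Complex.I * (a x : ℂ) * u x))
        = -(∫ x in Ioc (0:ℝ) 1, u'' x)
          + ((ξ : ℂ) * Complex.I) * ∫ x in Ioc (0:ℝ) 1, (a x : ℂ) * u x := by
      calc (∫ x in Ioc (0:ℝ) 1, (-u'' x + (ξ : ℂ) * Complex.I * (a x : ℂ) * u x))
          = ∫ x in Ioc (0:ℝ) 1, (-u'' x + ((ξ : ℂ) * Complex.I) * ((a x : ℂ) * u x)) :=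
            integral_congr_ae (Filter.Eventually.of_forall fun x => by ring)
        _ = (∫ x in Ioc (0:ℝ) 1, -u'' x)
            + ∫ x in Ioc (0:ℝ) 1, ((ξ : ℂ) * Complex.I) * ((a x : ℂ) * u x) :=
            integral_add hI1 hI2
        _ = -(∫ x in Ioc (0:ℝ) 1, u'' x)
            + ((ξ : ℂ) * Complex.I) * ∫ x in Ioc (0:ℝ) 1, (a x : ℂ) * u x := by
            rw [integral_neg, integral_const_mul]
    rw [hsplit, hu''Ioc, hf_mean, neg_zero, zero_add] at hcongr
    have hne : ((ξ : ℂ) * Complex.I) ≠ 0 :=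
      mul_ne_zero (Complex.ofReal_ne_zero.mpr hξ) Complex.I_ne_zero
    exact (mul_eq_zero.mp hcongr).resolve_left hne
  -- Step G: pointwise bound by L := ∫ ‖w‖
  set L : ℝ := ∫ x in Ioc (0:ℝ) 1, ‖w x‖ with hLdef
  have hL0 : 0 ≤ L := integral_nonneg fun x => norm_nonneg _
  have hdiff_le : ∀ s ∈ Icc (0:ℝ) 1, ∀ t ∈ Icc (0:ℝ) 1, ‖u t - u s‖ ≤ L := by
    intro s hs t ht
    rw [← hFTCu s t]
    calc ‖∫ x in s..t, w x‖ ≤ |∫ x in s..t, ‖w x‖| :=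
          intervalIntegral.norm_integral_le_abs_integral_norm
      _ ≤ L := by
          rcases le_total s t with hst | hst
          · rw [intervalIntegral.integral_of_le hst, _root_.abs_of_nonneg
              (integral_nonneg fun x => norm_nonneg _)]
            exact setIntegral_mono_set hwn_int
              (Filter.Eventually.of_forall fun x => norm_nonneg _)
              (HasSubset.Subset.eventuallyLE (Ioc_subset_Ioc hs.1 ht.2))
          · rw [intervalIntegral.integral_of_ge hst, abs_neg, _root_.abs_of_nonneg
              (integral_nonneg fun x => norm_nonneg _)]
            exact setIntegral_mono_set hwn_int
              (Filter.Eventually.of_forall fun x => norm_nonneg _)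
              (HasSubset.Subset.eventuallyLE (Ioc_subset_Ioc ht.1 hs.2))
  have hu_ptwise : ∀ x, ‖u x‖ ≤ L := by
    intro x
    have hper : Function.Periodic u 1 := hu_per
    have hfr : u x = u (Int.fract x) := by
      have h3 := hper.sub_int_mul_eq (x := x) ⌊x⌋
      rw [mul_one] at h3
      rw [Int.fract]
      exact h3.symm
    set t := Int.fract x with htdef
    have htmem : t ∈ Icc (0:ℝ) 1 := ⟨Int.fract_nonneg x, (Int.fract_lt_one x).le⟩
    have hrep : u t = ∫ y in Ioc (0:ℝ) 1, (a y : ℂ) * (u t - u y) := by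
      have hI1 : Integrable (fun y => (a y : ℂ) * u t) (volume.restrict (Ioc 0 1)) :=
        haC.mul_const _
      calc u t = (1 : ℂ) * u t - 0 := by ring
        _ = (∫ y in Ioc (0:ℝ) 1, (a y : ℂ)) * u t
            - ∫ y in Ioc (0:ℝ) 1, (a y : ℂ) * u y := by
            have hone : (∫ y in Ioc (0:ℝ) 1, (a y : ℂ))
                = ((∫ y in Ioc (0:ℝ) 1, a y : ℝ) : ℂ) := integral_ofReal
            rw [hone, ha_one, hau0]
            norm_num
        _ = (∫ y in Ioc (0:ℝ) 1, (a y : ℂ) * u t)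
            - ∫ y in Ioc (0:ℝ) 1, (a y : ℂ) * u y := by
            rw [integral_mul_const]
        _ = ∫ y in Ioc (0:ℝ) 1, ((a y : ℂ) * u t - (a y : ℂ) * u y) :=
            (integral_sub hI1 hau).symm
        _ = ∫ y in Ioc (0:ℝ) 1, (a y : ℂ) * (u t - u y) :=
            integral_congr_ae (Filter.Eventually.of_forall fun y => by ring)
    rw [hfr, hrep]
    have hbd : ∀ᵐ y ∂(volume.restrict (Ioc (0:ℝ) 1)),
        ‖(a y : ℂ) * (u t - u y)‖ ≤ a y * L := by
      filter_upwards [ae_restrict_of_ae ha_nonneg,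
        ae_restrict_mem (measurableSet_Ioc : MeasurableSet (Ioc (0:ℝ) 1))] with y hy hymem
      rw [norm_mul, Complex.norm_real, Real.norm_eq_abs, _root_.abs_of_nonneg hy]
      exact mul_le_mul_of_nonneg_left
        (hdiff_le y ⟨hymem.1.le, hymem.2⟩ t htmem) hy
    calc ‖∫ y in Ioc (0:ℝ) 1, (a y : ℂ) * (u t - u y)‖
        ≤ ∫ y in Ioc (0:ℝ) 1, a y * L := norm_integral_le_of_norm_le (ha_int.mul_const _) hbd
      _ = L := by rw [integral_mul_const, ha_one, one_mul]
  -- Energy identity via Fubini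
  set E : ℝ := ∫ x in Ioc (0:ℝ) 1, ‖w x‖ ^ 2 with hEdef
  have hE0 : 0 ≤ E := integral_nonneg fun x => sq_nonneg _
  set A : ℂ := ∫ x in Ioc (0:ℝ) 1, u'' x * (starRingEnd ℂ) (u x) with hAdef
  have hwconj_int : Integrable (fun s => (starRingEnd ℂ) (w s)) (volume.restrict (Ioc 0 1)) :=
    (continuous_star.comp hw_cont).integrableOn_Ioc
  have hIocw : (∫ s in Ioc (0:ℝ) 1, w s) = 0 := by
    rw [← intervalIntegral.integral_of_le zero_le_one, hFTCu, hu10, sub_self]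
  have hA_eq : A = -(E : ℂ) := by
    set F : ℝ → ℝ → ℂ := fun t s => if t < s then u'' t * (starRingEnd ℂ) (w s) else 0 with hFdef
    have hsetm : MeasurableSet {p : ℝ × ℝ | p.1 < p.2} :=
      measurableSet_lt measurable_fst measurable_snd
    have hprod : Integrable (fun p : ℝ × ℝ => u'' p.1 * (starRingEnd ℂ) (w p.2))
        ((volume.restrict (Ioc 0 1)).prod (volume.restrict (Ioc 0 1))) :=
      hu''_int.mul_prod hwconj_int
    have huncurry : Function.uncurry F
        = {p : ℝ × ℝ | p.1 < p.2}.indicator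
            (fun p => u'' p.1 * (starRingEnd ℂ) (w p.2)) := by
      funext p
      simp only [Function.uncurry, hFdef, Set.indicator_apply, Set.mem_setOf_eq]
    have hFint : Integrable (Function.uncurry F)
        ((volume.restrict (Ioc 0 1)).prod (volume.restrict (Ioc 0 1))) := by
      rw [huncurry]
      exact hprod.indicator hsetm
    have hswap := integral_integral_swap hFint
    -- LHS = -A
    have hLHS : (∫ t in Ioc (0:ℝ) 1, ∫ s in Ioc (0:ℝ) 1, F t s) = -A := by
      have hinner : ∀ t ∈ Ioc (0:ℝ) 1,
          (∫ s in Ioc (0:ℝ) 1, F t s) = u'' t * (starRingEnd ℂ) (u 1 - u t) := by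
        intro t ht
        have h1 : (∫ s in Ioc (0:ℝ) 1, F t s)
            = ∫ s in Ioc (0:ℝ) 1, (Ioi t).indicator
                (fun s => u'' t * (starRingEnd ℂ) (w s)) s := by
          refine integral_congr_ae (Filter.Eventually.of_forall fun s => ?_)
          simp only [hFdef, Set.indicator_apply, Set.mem_Ioi]
        rw [h1, setIntegral_indicator measurableSet_Ioi]
        have h2 : Ioc (0:ℝ) 1 ∩ Ioi t = Ioc t 1 := by
          rw [Set.Ioc_inter_Ioi, max_eq_right ht.1.le]
        rw [h2, integral_const_mul]
        congr 1
        have hconj : (∫ s in Ioc t 1, (starRingEnd ℂ) (w s))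
            = (starRingEnd ℂ) (∫ s in Ioc t 1, w s) := integral_conj
        rw [hconj, ← intervalIntegral.integral_of_le ht.2, hFTCu]
      rw [setIntegral_congr_fun measurableSet_Ioc hinner]
      have h3 : (∫ t in Ioc (0:ℝ) 1, u'' t * (starRingEnd ℂ) (u 1 - u t))
          = ∫ t in Ioc (0:ℝ) 1,
              (u'' t * (starRingEnd ℂ) (u 1) - u'' t * (starRingEnd ℂ) (u t)) := by
        refine integral_congr_ae (Filter.Eventually.of_forall fun t => ?_)
        simp only [map_sub]
        ring
      rw [h3, integral_sub (hu''_int.mul_const _) hu''u, integral_mul_const, hu''Ioc,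
        zero_mul, zero_sub]
    -- RHS = E
    have hRHS : (∫ s in Ioc (0:ℝ) 1, ∫ t in Ioc (0:ℝ) 1, F t s) = (E : ℂ) := by
      have hinner : ∀ s ∈ Ioc (0:ℝ) 1,
          (∫ t in Ioc (0:ℝ) 1, F t s) = (w s - w 0) * (starRingEnd ℂ) (w s) := by
        intro s hs
        have h1 : (∫ t in Ioc (0:ℝ) 1, F t s)
            = ∫ t in Ioc (0:ℝ) 1, (Iio s).indicator
                (fun t => u'' t * (starRingEnd ℂ) (w s)) t := by
          refine integral_congr_ae (Filter.Eventually.of_forall fun t => ?_)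
          simp only [hFdef, Set.indicator_apply, Set.mem_Iio]
        rw [h1, setIntegral_indicator measurableSet_Iio]
        have h2 : Ioc (0:ℝ) 1 ∩ Iio s = Ioo 0 s := by
          ext y
          simp only [Set.mem_inter_iff, Set.mem_Ioc, Set.mem_Iio, Set.mem_Ioo]
          constructor
          · rintro ⟨⟨hy1, _⟩, hy3⟩; exact ⟨hy1, hy3⟩
          · rintro ⟨hy1, hy3⟩; exact ⟨⟨hy1, hy3.le.trans hs.2⟩, hy3⟩
        rw [h2, integral_mul_const, ← integral_Ioc_eq_integral_Ioo,
          ← intervalIntegral.integral_of_le hs.1.le]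
        have := hFTC s
        have h4 : (∫ t in (0:ℝ)..s, u'' t) = w s - w 0 := by
          rw [this]; ring
        rw [h4]
      rw [setIntegral_congr_fun measurableSet_Ioc hinner]
      have h5 : (∫ s in Ioc (0:ℝ) 1, (w s - w 0) * (starRingEnd ℂ) (w s))
          = ∫ s in Ioc (0:ℝ) 1,
              (((‖w s‖ ^ 2 : ℝ) : ℂ) - w 0 * (starRingEnd ℂ) (w s)) := by
        refine integral_congr_ae (Filter.Eventually.of_forall fun s => ?_)
        have hzz : w s * (starRingEnd ℂ) (w s) = ((‖w s‖ ^ 2 : ℝ) : ℂ) := by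
          rw [Complex.mul_conj, Complex.normSq_eq_norm_sq]
        simp only [sub_mul, hzz]
      have hI6 : Integrable (fun s => ((‖w s‖ ^ 2 : ℝ) : ℂ)) (volume.restrict (Ioc 0 1)) :=
        hwn2_int.ofReal
      have hI7 : Integrable (fun s => w 0 * (starRingEnd ℂ) (w s))
          (volume.restrict (Ioc 0 1)) := hwconj_int.const_mul _
      rw [h5, integral_sub hI6 hI7, integral_const_mul]
      have h8 : (∫ s in Ioc (0:ℝ) 1, (starRingEnd ℂ) (w s)) = 0 := by
        rw [integral_conj, hIocw, map_zero]
      have h9 : (∫ s in Ioc (0:ℝ) 1, ((‖w s‖ ^ 2 : ℝ) : ℂ))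
          = ((∫ s in Ioc (0:ℝ) 1, ‖w s‖ ^ 2 : ℝ) : ℂ) := integral_ofReal
      rw [h8, h9, mul_zero, sub_zero]
    rw [hLHS, hRHS] at hswap
    linear_combination -hswap
  -- integrate equation against conj u
  set U2 : ℝ := ∫ x in Ioc (0:ℝ) 1, a x * ‖u x‖ ^ 2 with hU2def
  set R : ℂ := ∫ x in Ioc (0:ℝ) 1, (a x : ℂ) * f x * (starRingEnd ℂ) (u x) with hRdef
  have hkey : -A + ((ξ : ℂ) * Complex.I) * (U2 : ℂ) = R := by
    have hptw : ∀ x, (-u'' x + (ξ : ℂ) * Complex.I * (a x : ℂ) * u x) * (starRingEnd ℂ) (u x)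
        = -(u'' x * (starRingEnd ℂ) (u x))
          + ((ξ : ℂ) * Complex.I) * ((a x * ‖u x‖ ^ 2 : ℝ) : ℂ) := by
      intro x
      have h1 : u x * (starRingEnd ℂ) (u x) = ((‖u x‖ ^ 2 : ℝ) : ℂ) := by
        rw [Complex.mul_conj, Complex.normSq_eq_norm_sq]
      calc (-u'' x + (ξ : ℂ) * Complex.I * (a x : ℂ) * u x) * (starRingEnd ℂ) (u x)
          = -(u'' x * (starRingEnd ℂ) (u x))
            + ((ξ : ℂ) * Complex.I) * ((a x : ℂ) * (u x * (starRingEnd ℂ) (u x))) := by ring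
        _ = -(u'' x * (starRingEnd ℂ) (u x))
            + ((ξ : ℂ) * Complex.I) * ((a x * ‖u x‖ ^ 2 : ℝ) : ℂ) := by
            rw [h1]; push_cast; ring
    have hae : ∀ᵐ x ∂(volume.restrict (Ioc (0:ℝ) 1)),
        (-(u'' x * (starRingEnd ℂ) (u x))
          + ((ξ : ℂ) * Complex.I) * ((a x * ‖u x‖ ^ 2 : ℝ) : ℂ))
        = (a x : ℂ) * f x * (starRingEnd ℂ) (u x) := by
      filter_upwards [ae_restrict_of_ae heq] with x hx
      rw [← hptw x, hx]
    have hI1 : Integrable (fun x => -(u'' x * (starRingEnd ℂ) (u x)))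
        (volume.restrict (Ioc 0 1)) := hu''u.neg
    have hI2 : Integrable (fun x => ((ξ : ℂ) * Complex.I) * ((a x * ‖u x‖ ^ 2 : ℝ) : ℂ))
        (volume.restrict (Ioc 0 1)) := hau2.ofReal.const_mul _
    calc -A + ((ξ : ℂ) * Complex.I) * (U2 : ℂ)
        = (∫ x in Ioc (0:ℝ) 1, -(u'' x * (starRingEnd ℂ) (u x)))
          + ∫ x in Ioc (0:ℝ) 1, ((ξ : ℂ) * Complex.I) * ((a x * ‖u x‖ ^ 2 : ℝ) : ℂ) := by
          rw [integral_neg, integral_const_mul]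
          have h9 : (∫ x in Ioc (0:ℝ) 1, ((a x * ‖u x‖ ^ 2 : ℝ) : ℂ))
              = ((∫ x in Ioc (0:ℝ) 1, a x * ‖u x‖ ^ 2 : ℝ) : ℂ) := integral_ofReal
          rw [h9]
      _ = ∫ x in Ioc (0:ℝ) 1,
            (-(u'' x * (starRingEnd ℂ) (u x))
              + ((ξ : ℂ) * Complex.I) * ((a x * ‖u x‖ ^ 2 : ℝ) : ℂ)) :=
          (integral_add hI1 hI2).symm
      _ = R := integral_congr_ae hae
  have hER : (E : ℂ) + ((ξ : ℂ) * Complex.I) * (U2 : ℝ) = R := by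
    rw [← hkey, hA_eq]
    push_cast
    ring
  have hRe : E = R.re := by
    rw [← hER]
    simp [Complex.add_re, Complex.mul_re, Complex.mul_im]
  have hnormR : ‖R‖ ≤ ∫ x in Ioc (0:ℝ) 1, a x * (‖f x‖ * ‖u x‖) := by
    refine norm_integral_le_of_norm_le hafu_r ?_
    filter_upwards [ae_restrict_of_ae ha_nonneg] with x hx
    rw [norm_mul, norm_mul, Complex.norm_real, RCLike.norm_conj,
      Real.norm_eq_abs, _root_.abs_of_nonneg hx, mul_assoc]
  -- weighted Cauchy-Schwarz
  set F : ℝ := Real.sqrt (∫ x in Ioc (0:ℝ) 1, a x * ‖f x‖ ^ 2) with hFdef2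
  set U : ℝ := Real.sqrt U2 with hUdef
  have hF0 : 0 ≤ F := Real.sqrt_nonneg _
  have hcs2 : (∫ x in Ioc (0:ℝ) 1, a x * (‖f x‖ * ‖u x‖)) ≤ F * U := by
    have hg2 : (fun x => a x * ‖f x‖ ^ 2)
        =ᵐ[volume.restrict (Ioc (0:ℝ) 1)] fun x => (Real.sqrt (a x) * ‖f x‖) ^ 2 := by
      filter_upwards [ae_restrict_of_ae ha_nonneg] with x hx
      rw [mul_pow, Real.sq_sqrt hx]
    have hh2 : (fun x => a x * ‖u x‖ ^ 2)
        =ᵐ[volume.restrict (Ioc (0:ℝ) 1)] fun x => (Real.sqrt (a x) * ‖u x‖) ^ 2 := by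
      filter_upwards [ae_restrict_of_ae ha_nonneg] with x hx
      rw [mul_pow, Real.sq_sqrt hx]
    have hgh : (fun x => a x * (‖f x‖ * ‖u x‖))
        =ᵐ[volume.restrict (Ioc (0:ℝ) 1)]
          fun x => (Real.sqrt (a x) * ‖f x‖) * (Real.sqrt (a x) * ‖u x‖) := by
      filter_upwards [ae_restrict_of_ae ha_nonneg] with x hx
      have hss : Real.sqrt (a x) * Real.sqrt (a x) = a x := Real.mul_self_sqrt hx
      rw [show Real.sqrt (a x) * ‖f x‖ * (Real.sqrt (a x) * ‖u x‖)
          = (Real.sqrt (a x) * Real.sqrt (a x)) * (‖f x‖ * ‖u x‖) from by ring, hss]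
    have h1 := cs_integral (g := fun x => Real.sqrt (a x) * ‖f x‖)
      (h := fun x => Real.sqrt (a x) * ‖u x‖) (μ := volume.restrict (Ioc (0:ℝ) 1))
      (haf2.congr hg2) (hau2.congr hh2) (hafu_r.congr hgh)
    rw [← integral_congr_ae hgh, ← integral_congr_ae hg2, ← integral_congr_ae hh2] at h1
    exact h1
  have hEFU : E ≤ F * U := by
    calc E = R.re := hRe
      _ ≤ ‖R‖ := Complex.re_le_norm R
      _ ≤ ∫ x in Ioc (0:ℝ) 1, a x * (‖f x‖ * ‖u x‖) := hnormR
      _ ≤ F * U := hcs2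
  -- U ≤ L
  have hU2L : U2 ≤ L ^ 2 := by
    have hmono : (fun x => a x * ‖u x‖ ^ 2)
        ≤ᵐ[volume.restrict (Ioc (0:ℝ) 1)] fun x => a x * L ^ 2 := by
      filter_upwards [ae_restrict_of_ae ha_nonneg] with x hx
      have hux := hu_ptwise x
      exact mul_le_mul_of_nonneg_left (by nlinarith [norm_nonneg (u x)]) hx
    calc U2 ≤ ∫ x in Ioc (0:ℝ) 1, a x * L ^ 2 :=
          integral_mono_ae hau2 (ha_int.mul_const _) hmono
      _ = L ^ 2 := by rw [integral_mul_const, ha_one, one_mul]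
  have hUL : U ≤ L := by
    rw [hUdef]
    calc Real.sqrt U2 ≤ Real.sqrt (L ^ 2) := Real.sqrt_le_sqrt hU2L
      _ = L := by rw [Real.sqrt_sq hL0]
  -- L ≤ sqrt E
  have hLSE : L ≤ Real.sqrt E := by
    have hone : Integrable (fun _ : ℝ => (1:ℝ) ^ 2) (volume.restrict (Ioc (0:ℝ) 1)) := by
      simp only [one_pow]
      exact integrableOn_const (by simp [Real.volume_Ioc])
    have h1 := cs_integral (g := fun x => ‖w x‖) (h := fun _ => (1:ℝ))
      (μ := volume.restrict (Ioc (0:ℝ) 1)) hwn2_int hone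
      (hwn_int.congr (Filter.Eventually.of_forall fun x => by simp))
    have h2 : (∫ x in Ioc (0:ℝ) 1, ‖w x‖ * 1) = L := by simp [hLdef]
    have h3 : (∫ _x in Ioc (0:ℝ) 1, (1:ℝ) ^ 2) = 1 := by
      simp [Real.volume_Ioc]
    rw [h2, h3, Real.sqrt_one, mul_one] at h1
    exact h1
  -- conclude
  intro x
  have h1 : ‖u x‖ ≤ L := hu_ptwise x
  have hSE0 : 0 ≤ Real.sqrt E := Real.sqrt_nonneg _
  have hSE2 : Real.sqrt E ^ 2 = E := Real.sq_sqrt hE0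
  have hgoal : seminormA a f = F := rfl
  rw [hgoal]
  have hEFSE : E ≤ F * Real.sqrt E :=
    hEFU.trans (mul_le_mul_of_nonneg_left (hUL.trans hLSE) hF0)
  rcases eq_or_lt_of_le hSE0 with hSE | hSE
  · have hL_le : L ≤ 0 := by rw [← hSE] at hLSE; exact hLSE
    linarith [h1, hF0]
  · have hSEF : Real.sqrt E ≤ F := by
      have hmul : Real.sqrt E * Real.sqrt E ≤ F * Real.sqrt E := by nlinarith [hSE2, hEFSE]
      exact le_of_mul_le_mul_right hmul hSE
    linarith [h1, hUL, hLSE, hF0]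
end
end

section
/- Let a ∈ 𝒜, ξ ∈ ℝ, and let f : 𝕋 → ℂ be bounded measurable with ∫ a f = 0. If u is a periodic W^{2,1} function with −u'' + iξ a u = a f a.e., then ‖u'‖_{L²} ≤ [f]_a, and moreover ‖u − p‖_∞ ≤ [f]_a where p = ∫ u denotes the mean of u over [0,1]. -/
open MeasureTheory Set Complex

noncomputable section

/-- Cauchy–Schwarz for integrals of nonnegative real functions. -/
lemma cs_sqrt {μ : Measure ℝ} (g h : ℝ → ℝ) (hg0 : 0 ≤ᵐ[μ] g) (hh0 : 0 ≤ᵐ[μ] h)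
    (hgm : AEStronglyMeasurable g μ) (hhm : AEStronglyMeasurable h μ)
    (hg2 : Integrable (fun x => g x ^ 2) μ) (hh2 : Integrable (fun x => h x ^ 2) μ) :
    ∫ x, g x * h x ∂μ ≤ Real.sqrt (∫ x, g x ^ 2 ∂μ) * Real.sqrt (∫ x, h x ^ 2 ∂μ) := by
  have hpq : Real.HolderConjugate 2 2 := Real.HolderConjugate.two_two
  have h2 : (ENNReal.ofReal (2:ℝ)) = 2 := by norm_num
  have hgL : MemLp g (ENNReal.ofReal (2:ℝ)) μ := by
    rw [h2]; exact (memLp_two_iff_integrable_sq hgm).2 hg2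
  have hhL : MemLp h (ENNReal.ofReal (2:ℝ)) μ := by
    rw [h2]; exact (memLp_two_iff_integrable_sq hhm).2 hh2
  have H := MeasureTheory.integral_mul_le_Lp_mul_Lq_of_nonneg hpq hg0 hh0 hgL hhL
  have hr2 : ∀ x : ℝ, x ^ (2:ℝ) = x ^ 2 := fun x => by
    rw [show (2:ℝ) = ((2:ℕ):ℝ) by norm_num, Real.rpow_natCast]
  simp only [hr2] at H
  rw [← Real.sqrt_eq_rpow, ← Real.sqrt_eq_rpow] at H
  exact H

lemma periodic_eval_fract {w : ℝ → ℂ} (hper : ∀ x, w (x + 1) = w x) (x : ℝ) :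
    w (Int.fract x) = w x := by
  have hp : Function.Periodic w 1 := hper
  have h := hp.sub_int_mul_eq (x := x) ⌊x⌋
  rw [Int.fract]
  simpa using h

lemma periodic_bound {w : ℝ → ℂ} (hw : Continuous w) (hper : ∀ x, w (x + 1) = w x) :
    ∃ C, ∀ x, ‖w x‖ ≤ C := by
  obtain ⟨C, hC⟩ := (isCompact_Icc (a := (0:ℝ)) (b := 1)).exists_bound_of_continuousOn
    hw.continuousOn
  refine ⟨C, fun x => ?_⟩
  rw [← periodic_eval_fract hper x]
  exact hC _ ⟨Int.fract_nonneg x, (Int.fract_lt_one x).le⟩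

/-- Integration by parts for periodic `W^{2,1}` functions. -/
lemma ibp_aux (u u'' : ℝ → ℂ)
    (hu_per : ∀ x, u (x + 1) = u x)
    (hu_smooth : ContDiff ℝ 1 u)
    (hu_ftc : ∀ x, deriv u x = deriv u 0 + ∫ t in (0:ℝ)..x, u'' t)
    (hu''_int : IntegrableOn u'' (Ioc 0 1)) :
    ∫ x in Ioc (0:ℝ) 1, u'' x * (starRingEnd ℂ) (u x)
      = -(((∫ x in Ioc (0:ℝ) 1, ‖deriv u x‖ ^ 2 : ℝ) : ℝ) : ℂ) := by
  set v : ℝ → ℂ := deriv u with hv_def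
  have hu_cont : Continuous u := hu_smooth.continuous
  have hu_diff : Differentiable ℝ u := hu_smooth.differentiable one_ne_zero
  have hv_cont : Continuous v := hu_smooth.continuous_deriv le_rfl
  have hv_per : ∀ x, v (x + 1) = v x := by
    intro x
    have hfun : (fun y => u (y + 1)) = u := funext hu_per
    calc v (x + 1) = deriv (fun y => u (y + 1)) x := (deriv_comp_add_const u 1 x).symm
    _ = v x := by rw [hfun]
  have hu10 : u 1 = u 0 := by simpa using hu_per 0
  have hv10 : v 1 = v 0 := by simpa using hv_per 0
  -- the mean of u'' vanishes
  have hu''0 : (∫ t in (0:ℝ)..1, u'' t) = 0 := by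
    have h1 := hu_ftc 1
    rw [hv10] at h1
    exact (left_eq_add.mp h1)
  have hu''_ioc0 : (∫ x in Ioc (0:ℝ) 1, u'' x) = 0 := by
    rwa [intervalIntegral.integral_of_le zero_le_one] at hu''0
  -- FTC for u
  have ftc2 : ∀ y x : ℝ, (∫ t in y..x, v t) = u x - u y := fun y x =>
    intervalIntegral.integral_deriv_eq_sub (fun t _ => hu_diff t)
      (hv_cont.intervalIntegrable y x)
  -- conj (u x) in terms of an integral of conj v
  have conj_u : ∀ x ∈ Ioc (0:ℝ) 1,
      (∫ t in Ioc x 1, (starRingEnd ℂ) (v t))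
        = (starRingEnd ℂ) (u 1) - (starRingEnd ℂ) (u x) := by
    intro x hx
    have hc : (∫ t in Ioc x 1, (starRingEnd ℂ) (v t))
        = (starRingEnd ℂ) (∫ t in Ioc x 1, v t) := integral_conj
    rw [hc, ← intervalIntegral.integral_of_le hx.2, ftc2 x 1, map_sub]
  -- the auxiliary kernel
  set F : ℝ → ℝ → ℂ := fun x t => if x < t then u'' x * (starRingEnd ℂ) (v t) else 0 with hF_def
  have hconj_v_int : IntegrableOn (fun t => (starRingEnd ℂ) (v t)) (Ioc (0:ℝ) 1) :=
    (Complex.continuous_conj.comp hv_cont).integrableOn_Ioc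
  have hF_int : Integrable (Function.uncurry F)
      ((volume.restrict (Ioc (0:ℝ) 1)).prod (volume.restrict (Ioc (0:ℝ) 1))) := by
    have hbase : Integrable (fun p : ℝ × ℝ => u'' p.1 * (starRingEnd ℂ) (v p.2))
        ((volume.restrict (Ioc (0:ℝ) 1)).prod (volume.restrict (Ioc (0:ℝ) 1))) :=
      Integrable.mul_prod hu''_int hconj_v_int
    have : Function.uncurry F = {p : ℝ × ℝ | p.1 < p.2}.indicator
        (fun p => u'' p.1 * (starRingEnd ℂ) (v p.2)) := by
      funext p
      simp only [Function.uncurry, hF_def, Set.indicator_apply, mem_setOf_eq]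
    rw [this]
    exact hbase.indicator (measurableSet_lt measurable_fst measurable_snd)
  -- inner integral in t
  have inner_t : ∀ x ∈ Ioc (0:ℝ) 1,
      (∫ t in Ioc (0:ℝ) 1, F x t)
        = u'' x * ((starRingEnd ℂ) (u 1) - (starRingEnd ℂ) (u x)) := by
    intro x hx
    have h1 : (fun t => F x t) = (Ioi x).indicator (fun t => u'' x * (starRingEnd ℂ) (v t)) := by
      funext t; simp only [hF_def, Set.indicator_apply, mem_Ioi]
    have hset : Ioc (0:ℝ) 1 ∩ Ioi x = Ioc x 1 := by
      ext t
      simp only [mem_inter_iff, mem_Ioc, mem_Ioi]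
      constructor
      · rintro ⟨⟨_, h2⟩, h3⟩; exact ⟨h3, h2⟩
      · rintro ⟨h1', h2⟩; exact ⟨⟨lt_trans hx.1 h1', h2⟩, h1'⟩
    rw [h1, setIntegral_indicator measurableSet_Ioi, hset, integral_const_mul, conj_u x hx]
  -- inner integral in x (after swapping)
  have inner_x : ∀ t ∈ Ioc (0:ℝ) 1,
      (∫ x in Ioc (0:ℝ) 1, F x t) = (v t - v 0) * (starRingEnd ℂ) (v t) := by
    intro t ht
    have h1 : (fun x => F x t) = (Iio t).indicator (fun x => u'' x * (starRingEnd ℂ) (v t)) := by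
      funext x; simp only [hF_def, Set.indicator_apply, mem_Iio]
    have hset : Ioc (0:ℝ) 1 ∩ Iio t = Ioo 0 t := by
      ext x
      simp only [mem_inter_iff, mem_Ioc, mem_Ioo, mem_Iio]
      constructor
      · rintro ⟨⟨h1', _⟩, h3⟩; exact ⟨h1', h3⟩
      · rintro ⟨h1', h2⟩; exact ⟨⟨h1', le_trans h2.le ht.2⟩, h2⟩
    have hftc : (∫ x in Ioc (0:ℝ) t, u'' x) = v t - v 0 := by
      have h2 := hu_ftc t
      rw [intervalIntegral.integral_of_le ht.1.le] at h2
      rw [h2]; ring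
    rw [h1, setIntegral_indicator measurableSet_Iio, hset, integral_mul_const,
      ← integral_Ioc_eq_integral_Ioo, hftc]
  -- rewrite the main integral via inner_t and swap
  have mulint : ∀ (g : ℝ → ℂ), Continuous g →
      Integrable (fun x => u'' x * g x) (volume.restrict (Ioc (0:ℝ) 1)) := by
    intro g hg
    obtain ⟨C, hC⟩ := (isCompact_Icc (a := (0:ℝ)) (b := 1)).exists_bound_of_continuousOn
      hg.continuousOn
    have h := hu''_int.bdd_mul (c := C) hg.aestronglyMeasurable
      ((ae_restrict_iff' measurableSet_Ioc).2 (Filter.Eventually.of_forall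
        fun x hx => hC x ⟨hx.1.le, hx.2⟩))
    exact h.congr (Filter.Eventually.of_forall fun x => mul_comm _ _)
  have step1 : (∫ x in Ioc (0:ℝ) 1, u'' x * (starRingEnd ℂ) (u x))
      = -(∫ x in Ioc (0:ℝ) 1, ∫ t in Ioc (0:ℝ) 1, F x t) := by
    have hcong : (∫ x in Ioc (0:ℝ) 1, ∫ t in Ioc (0:ℝ) 1, F x t)
        = ∫ x in Ioc (0:ℝ) 1, u'' x * ((starRingEnd ℂ) (u 1) - (starRingEnd ℂ) (u x)) :=
      setIntegral_congr_fun measurableSet_Ioc fun x hx => inner_t x hx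
    rw [hcong]
    have hsub : (∫ x in Ioc (0:ℝ) 1,
        u'' x * ((starRingEnd ℂ) (u 1) - (starRingEnd ℂ) (u x)))
        = (∫ x in Ioc (0:ℝ) 1, u'' x * (starRingEnd ℂ) (u 1))
          - ∫ x in Ioc (0:ℝ) 1, u'' x * (starRingEnd ℂ) (u x) := by
      rw [← integral_sub (mulint (fun _ => (starRingEnd ℂ) (u 1)) continuous_const)
        (mulint (fun x => (starRingEnd ℂ) (u x)) (Complex.continuous_conj.comp hu_cont))]
      exact integral_congr_ae (Filter.Eventually.of_forall fun x => by ring)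
    rw [hsub, integral_mul_const, hu''_ioc0, zero_mul, zero_sub, neg_neg]
  have swap : (∫ x in Ioc (0:ℝ) 1, ∫ t in Ioc (0:ℝ) 1, F x t)
      = ∫ t in Ioc (0:ℝ) 1, ∫ x in Ioc (0:ℝ) 1, F x t :=
    MeasureTheory.integral_integral_swap hF_int
  -- compute the swapped integral
  have step2 : (∫ t in Ioc (0:ℝ) 1, ∫ x in Ioc (0:ℝ) 1, F x t)
      = ((∫ x in Ioc (0:ℝ) 1, ‖v x‖ ^ 2 : ℝ) : ℂ) := by
    have hcong : (∫ t in Ioc (0:ℝ) 1, ∫ x in Ioc (0:ℝ) 1, F x t)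
        = ∫ t in Ioc (0:ℝ) 1, (v t - v 0) * (starRingEnd ℂ) (v t) :=
      setIntegral_congr_fun measurableSet_Ioc fun t ht => inner_x t ht
    rw [hcong]
    have hvv : IntegrableOn (fun t => v t * (starRingEnd ℂ) (v t)) (Ioc (0:ℝ) 1) :=
      (hv_cont.mul (Complex.continuous_conj.comp hv_cont)).integrableOn_Ioc
    have hsub : (∫ t in Ioc (0:ℝ) 1, (v t - v 0) * (starRingEnd ℂ) (v t))
        = (∫ t in Ioc (0:ℝ) 1, v t * (starRingEnd ℂ) (v t))
          - ∫ t in Ioc (0:ℝ) 1, v 0 * (starRingEnd ℂ) (v t) := by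
      rw [← integral_sub hvv (hconj_v_int.const_mul (v 0))]
      congr 1; funext t; ring
    have hzero : (∫ t in Ioc (0:ℝ) 1, v 0 * (starRingEnd ℂ) (v t)) = 0 := by
      rw [integral_const_mul, integral_conj, ← intervalIntegral.integral_of_le zero_le_one,
        ftc2 0 1, hu10, sub_self, map_zero, mul_zero]
    have hsq : (∫ t in Ioc (0:ℝ) 1, v t * (starRingEnd ℂ) (v t))
        = ((∫ t in Ioc (0:ℝ) 1, ‖v t‖ ^ 2 : ℝ) : ℂ) := by
      have hoR : ((∫ t in Ioc (0:ℝ) 1, ‖v t‖ ^ 2 : ℝ) : ℂ)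
          = ∫ t in Ioc (0:ℝ) 1, ((‖v t‖ ^ 2 : ℝ) : ℂ) := integral_ofReal.symm
      rw [hoR]
      refine setIntegral_congr_fun measurableSet_Ioc fun t _ => ?_
      rw [Complex.mul_conj, Complex.normSq_eq_norm_sq]
    rw [hsub, hzero, sub_zero, hsq]
  rw [step1, swap, step2]


/-- for `a ∈ 𝒜`, `ξ ∈ ℝ` and `f : 𝕋 → ℂ` bounded measurable with
`∫ a f = 0`, any periodic `W^{2,1}` solution of `-u'' + iξ a u = a f` satisfies
`‖u'‖_{L²} ≤ [f]_a` and `‖u - p‖_∞ ≤ [f]_a`, where `p = ∫ u` is the mean of `u`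
over `[0,1]`.  (The sup-norm bound is expressed pointwise.) -/
theorem statement_9 (a : ℝ → ℝ) (ha : MemA a) (ξ : ℝ)
    (f : ℝ → ℂ) (hf_per : ∀ x, f (x + 1) = f x) (hf_meas : Measurable f)
    (hf_bdd : ∃ M, ∀ x, ‖f x‖ ≤ M)
    (hf_mean : (∫ x in Ioc (0:ℝ) 1, (a x : ℂ) * f x) = 0)
    (u u'' : ℝ → ℂ) (hu : IsPeriodicW21 u u'')
    (heq : ∀ᵐ x : ℝ,
      -u'' x + (ξ : ℂ) * Complex.I * (a x : ℂ) * u x = (a x : ℂ) * f x) :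
    Real.sqrt (∫ x in Ioc (0:ℝ) 1, ‖deriv u x‖ ^ 2) ≤ seminormA a f ∧
    ∀ x, ‖u x - ∫ y in Ioc (0:ℝ) 1, u y‖ ≤ seminormA a f := by
  obtain ⟨ha_meas, ha_per, ha_pos, ha_int, ha_one⟩ := ha
  obtain ⟨hu_per, hu''_per, hu_smooth, hu_ftc, hu''_int⟩ := hu
  obtain ⟨M, hM⟩ := hf_bdd
  have hM0 : 0 ≤ M := le_trans (norm_nonneg (f 0)) (hM 0)
  have hu_cont : Continuous u := hu_smooth.continuous
  have hu_diff : Differentiable ℝ u := hu_smooth.differentiable one_ne_zero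
  have hv_cont : Continuous (deriv u) := hu_smooth.continuous_deriv le_rfl
  have meas01 : (volume (Ioc (0:ℝ) 1)) = 1 := by simp [Real.volume_Ioc]
  set p : ℂ := ∫ y in Ioc (0:ℝ) 1, u y with hp_def
  set L : ℝ := ∫ x in Ioc (0:ℝ) 1, ‖deriv u x‖ with hL_def
  set E2 : ℝ := ∫ x in Ioc (0:ℝ) 1, ‖deriv u x‖ ^ 2 with hE2_def
  set K := seminormA a f with hK_def
  have hE2_nonneg : 0 ≤ E2 := integral_nonneg fun x => by positivity
  have hK_nonneg : 0 ≤ K := Real.sqrt_nonneg _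
  have hL_nonneg : 0 ≤ L := integral_nonneg fun x => norm_nonneg _
  have ftc2 : ∀ y x : ℝ, (∫ t in y..x, deriv u t) = u x - u y := fun y x =>
    intervalIntegral.integral_deriv_eq_sub (fun t _ => hu_diff t)
      (hv_cont.intervalIntegrable y x)
  -- pointwise oscillation bound on Icc 0 1
  have hIcc : ∀ x ∈ Icc (0:ℝ) 1, ∀ y ∈ Icc (0:ℝ) 1, ‖u x - u y‖ ≤ L := by
    intro x hx y hy
    rw [← ftc2 y x]
    have h2 : ‖∫ t in y..x, deriv u t‖ = ‖∫ t in min y x..max y x, deriv u t‖ := by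
      rcases le_total y x with h | h
      · rw [min_eq_left h, max_eq_right h]
      · rw [min_eq_right h, max_eq_left h, intervalIntegral.integral_symm, norm_neg]
    rw [h2]
    refine le_trans (intervalIntegral.norm_integral_le_integral_norm min_le_max) ?_
    rw [intervalIntegral.integral_of_le min_le_max]
    exact setIntegral_mono_set hv_cont.norm.integrableOn_Ioc
      (Filter.Eventually.of_forall fun t => norm_nonneg _)
      (HasSubset.Subset.eventuallyLE
        (Ioc_subset_Ioc (le_min hy.1 hx.1) (max_le hy.2 hx.2)))
  have hpt : ∀ x, ‖u x - p‖ ≤ L := by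
    intro x
    rw [← periodic_eval_fract hu_per x]
    have hx' : Int.fract x ∈ Icc (0:ℝ) 1 := ⟨Int.fract_nonneg x, (Int.fract_lt_one x).le⟩
    have hconst : (u (Int.fract x)) = ∫ y in Ioc (0:ℝ) 1, u (Int.fract x) := by
      rw [setIntegral_const]; simp [meas01]
    have hcint : IntegrableOn (fun _ : ℝ => u (Int.fract x)) (Ioc (0:ℝ) 1) :=
      integrableOn_const (by rw [meas01]; exact ENNReal.one_ne_top)
    have hsub : u (Int.fract x) - p = ∫ y in Ioc (0:ℝ) 1, (u (Int.fract x) - u y) := by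
      rw [integral_sub hcint hu_cont.integrableOn_Ioc, ← hconst]
    rw [hsub]
    refine le_trans (norm_integral_le_of_norm_le (g := fun _ => L)
      (integrableOn_const (by rw [meas01]; exact ENNReal.one_ne_top))
      ((ae_restrict_iff' measurableSet_Ioc).2 (Filter.Eventually.of_forall
        fun y hy => hIcc (Int.fract x) hx' y ⟨hy.1.le, hy.2⟩))) ?_
    rw [setIntegral_const]; simp [meas01]
  -- integrability facts
  have ha_intC : Integrable (fun x => ((a x : ℝ) : ℂ)) (volume.restrict (Ioc (0:ℝ) 1)) :=
    ha_int.ofReal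
  obtain ⟨Cu, hCu⟩ := periodic_bound hu_cont hu_per
  have haf_int : Integrable (fun x => (a x : ℂ) * f x) (volume.restrict (Ioc (0:ℝ) 1)) := by
    have h := ha_intC.bdd_mul (c := M) hf_meas.aestronglyMeasurable
      (Filter.Eventually.of_forall hM)
    exact h.congr (Filter.Eventually.of_forall fun x => mul_comm _ _)
  have hafu_int : Integrable (fun x => (a x : ℂ) * f x * (starRingEnd ℂ) (u x))
      (volume.restrict (Ioc (0:ℝ) 1)) := by
    have h := haf_int.bdd_mul (c := Cu)
      ((Complex.continuous_conj.comp hu_cont).aestronglyMeasurable)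
      (Filter.Eventually.of_forall fun x => by
        simpa using hCu x)
    exact h.congr (Filter.Eventually.of_forall fun x => mul_comm _ _)
  have hafup_int : Integrable
      (fun x => (a x : ℂ) * f x * ((starRingEnd ℂ) (u x) - (starRingEnd ℂ) p))
      (volume.restrict (Ioc (0:ℝ) 1)) := by
    have hcont2 : Continuous fun x : ℝ => (starRingEnd ℂ) (u x) - (starRingEnd ℂ) p :=
      (Complex.continuous_conj.comp hu_cont).sub continuous_const
    have h := haf_int.bdd_mul (c := Cu + ‖p‖) hcont2.aestronglyMeasurable
      (Filter.Eventually.of_forall fun x => by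
        refine le_trans (norm_sub_le _ _) ?_
        gcongr
        · simpa using hCu x
        · simp)
    exact h.congr (Filter.Eventually.of_forall fun x => mul_comm _ _)
  have hauu_int : Integrable (fun x => (a x : ℂ) * (u x * (starRingEnd ℂ) (u x)))
      (volume.restrict (Ioc (0:ℝ) 1)) := by
    have h := ha_intC.bdd_mul (c := Cu * Cu)
      ((hu_cont.mul (Complex.continuous_conj.comp hu_cont)).aestronglyMeasurable)
      (Filter.Eventually.of_forall fun x => by
        rw [Pi.mul_apply, Function.comp_apply, norm_mul]
        have h1 := hCu x
        have h2 : ‖(starRingEnd ℂ) (u x)‖ ≤ Cu := by simpa using hCu x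
        exact mul_le_mul h1 h2 (norm_nonneg _) (le_trans (norm_nonneg _) h1))
    exact h.congr (Filter.Eventually.of_forall fun x => mul_comm _ _)
  have hu''u_int : Integrable (fun x => u'' x * (starRingEnd ℂ) (u x))
      (volume.restrict (Ioc (0:ℝ) 1)) := by
    have h := hu''_int.bdd_mul (c := Cu)
      ((Complex.continuous_conj.comp hu_cont).aestronglyMeasurable)
      (Filter.Eventually.of_forall fun x => by simpa using hCu x)
    exact h.congr (Filter.Eventually.of_forall fun x => mul_comm _ _)
  -- energy identity
  have hibp := ibp_aux u u'' hu_per hu_smooth hu_ftc hu''_int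
  have heq' : ∀ᵐ x ∂(volume.restrict (Ioc (0:ℝ) 1)),
      (-(u'' x * (starRingEnd ℂ) (u x)))
        + ((ξ : ℂ) * Complex.I) * ((a x : ℂ) * (u x * (starRingEnd ℂ) (u x)))
      = (a x : ℂ) * f x * (starRingEnd ℂ) (u x) := by
    filter_upwards [ae_restrict_of_ae heq] with x hx
    have h2 : (-u'' x + (ξ : ℂ) * Complex.I * (a x : ℂ) * u x) * (starRingEnd ℂ) (u x)
        = (a x : ℂ) * f x * (starRingEnd ℂ) (u x) := by rw [hx]
    linear_combination h2
  have hint_eq :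
      (∫ x in Ioc (0:ℝ) 1, ((-(u'' x * (starRingEnd ℂ) (u x)))
        + ((ξ : ℂ) * Complex.I) * ((a x : ℂ) * (u x * (starRingEnd ℂ) (u x)))))
      = ∫ x in Ioc (0:ℝ) 1, (a x : ℂ) * f x * (starRingEnd ℂ) (u x) :=
    integral_congr_ae heq'
  have hneg_int : Integrable (fun x => -(u'' x * (starRingEnd ℂ) (u x)))
      (volume.restrict (Ioc (0:ℝ) 1)) := hu''u_int.neg
  have hmul_int : Integrable (fun x =>
      ((ξ : ℂ) * Complex.I) * ((a x : ℂ) * (u x * (starRingEnd ℂ) (u x))))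
      (volume.restrict (Ioc (0:ℝ) 1)) := hauu_int.const_mul _
  rw [integral_add hneg_int hmul_int, integral_neg, hibp, neg_neg,
    integral_const_mul] at hint_eq
  have hauu_real : (∫ x in Ioc (0:ℝ) 1, (a x : ℂ) * (u x * (starRingEnd ℂ) (u x)))
      = ((∫ x in Ioc (0:ℝ) 1, a x * ‖u x‖ ^ 2 : ℝ) : ℂ) := by
    have hoR : ((∫ x in Ioc (0:ℝ) 1, a x * ‖u x‖ ^ 2 : ℝ) : ℂ)
        = ∫ x in Ioc (0:ℝ) 1, ((a x * ‖u x‖ ^ 2 : ℝ) : ℂ) := integral_ofReal.symm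
    rw [hoR]
    refine setIntegral_congr_fun measurableSet_Ioc fun x _ => ?_
    rw [Complex.mul_conj, Complex.normSq_eq_norm_sq]
    push_cast
    ring
  rw [hauu_real] at hint_eq
  -- take real parts
  have hre : E2 = (∫ x in Ioc (0:ℝ) 1, (a x : ℂ) * f x * (starRingEnd ℂ) (u x)).re := by
    have := congrArg Complex.re hint_eq
    simpa using this
  -- subtract the mean
  have hmean0 : (∫ x in Ioc (0:ℝ) 1, (a x : ℂ) * f x * (starRingEnd ℂ) p) = 0 := by
    rw [integral_mul_const, hf_mean, zero_mul]
  have hsplit : (∫ x in Ioc (0:ℝ) 1,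
      (a x : ℂ) * f x * ((starRingEnd ℂ) (u x) - (starRingEnd ℂ) p))
      = ∫ x in Ioc (0:ℝ) 1, (a x : ℂ) * f x * (starRingEnd ℂ) (u x) := by
    have : (∫ x in Ioc (0:ℝ) 1,
        (a x : ℂ) * f x * ((starRingEnd ℂ) (u x) - (starRingEnd ℂ) p))
        = (∫ x in Ioc (0:ℝ) 1, (a x : ℂ) * f x * (starRingEnd ℂ) (u x))
          - ∫ x in Ioc (0:ℝ) 1, (a x : ℂ) * f x * (starRingEnd ℂ) p := by
      rw [← integral_sub hafu_int (haf_int.mul_const _)]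
      exact integral_congr_ae (Filter.Eventually.of_forall fun x => by ring)
    rw [this, hmean0, sub_zero]
  -- bound the right-hand side
  have haf_norm_int : Integrable (fun x => a x * ‖f x‖) (volume.restrict (Ioc (0:ℝ) 1)) := by
    have h := ha_int.bdd_mul (c := M) hf_meas.norm.aestronglyMeasurable
      (Filter.Eventually.of_forall fun x => by simpa using hM x)
    exact h.congr (Filter.Eventually.of_forall fun x => mul_comm _ _)
  have hbound : E2 ≤ L * ∫ x in Ioc (0:ℝ) 1, a x * ‖f x‖ := by
    rw [hre, ← hsplit]
    refine le_trans (Complex.re_le_norm _) ?_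
    refine le_trans (le_of_eq rfl) ?_
    refine le_trans (norm_integral_le_integral_norm _) ?_
    have hmono : (∫ x in Ioc (0:ℝ) 1,
        ‖(a x : ℂ) * f x * ((starRingEnd ℂ) (u x) - (starRingEnd ℂ) p)‖)
        ≤ ∫ x in Ioc (0:ℝ) 1, a x * ‖f x‖ * L := by
      refine integral_mono_ae hafup_int.norm (haf_norm_int.mul_const L) ?_
      filter_upwards [ae_restrict_of_ae ha_pos] with x hx
      have hnorm : ‖(a x : ℂ) * f x * ((starRingEnd ℂ) (u x) - (starRingEnd ℂ) p)‖
          = a x * ‖f x‖ * ‖u x - p‖ := by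
        rw [norm_mul, norm_mul, ← map_sub, RCLike.norm_conj, Complex.norm_real,
          Real.norm_eq_abs, _root_.abs_of_nonneg hx]
      rw [hnorm]
      have : 0 ≤ a x * ‖f x‖ := by positivity
      exact mul_le_mul_of_nonneg_left (hpt x) this
    refine le_trans hmono ?_
    rw [integral_mul_const]
    rw [mul_comm]
  -- Cauchy-Schwarz I : ∫ a ‖f‖ ≤ K
  have hCS1 : (∫ x in Ioc (0:ℝ) 1, a x * ‖f x‖) ≤ K := by
    have hgm : AEStronglyMeasurable (fun x => Real.sqrt (a x))
        (volume.restrict (Ioc (0:ℝ) 1)) :=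
      (Real.continuous_sqrt.measurable.comp ha_meas).aestronglyMeasurable
    have hhm : AEStronglyMeasurable (fun x => Real.sqrt (a x) * ‖f x‖)
        (volume.restrict (Ioc (0:ℝ) 1)) :=
      hgm.mul hf_meas.norm.aestronglyMeasurable
    have hae : ∀ᵐ x ∂(volume.restrict (Ioc (0:ℝ) 1)), 0 ≤ a x := ae_restrict_of_ae ha_pos
    have hg2 : Integrable (fun x => Real.sqrt (a x) ^ 2) (volume.restrict (Ioc (0:ℝ) 1)) := by
      refine ha_int.congr ?_
      filter_upwards [hae] with x hx
      rw [Real.sq_sqrt hx]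
    have haf2_int : Integrable (fun x => a x * ‖f x‖ ^ 2)
        (volume.restrict (Ioc (0:ℝ) 1)) := by
      have h := ha_int.bdd_mul (c := M * M)
        (hf_meas.norm.aestronglyMeasurable.mul hf_meas.norm.aestronglyMeasurable)
        (Filter.Eventually.of_forall fun x => by
          simp only [Pi.mul_apply]
          rw [Real.norm_eq_abs, _root_.abs_of_nonneg (by positivity)]
          exact mul_le_mul (hM x) (hM x) (norm_nonneg _) hM0)
      refine h.congr (Filter.Eventually.of_forall fun x => ?_)
      simp only [Pi.mul_apply]
      ring
    have hh2 : Integrable (fun x => (Real.sqrt (a x) * ‖f x‖) ^ 2)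
        (volume.restrict (Ioc (0:ℝ) 1)) := by
      refine haf2_int.congr ?_
      filter_upwards [hae] with x hx
      rw [mul_pow, Real.sq_sqrt hx]
    have H := cs_sqrt (fun x => Real.sqrt (a x)) (fun x => Real.sqrt (a x) * ‖f x‖)
      (Filter.Eventually.of_forall fun x => Real.sqrt_nonneg _)
      (Filter.Eventually.of_forall fun x => by positivity)
      hgm hhm hg2 hh2
    have h1 : (∫ x in Ioc (0:ℝ) 1, Real.sqrt (a x) * (Real.sqrt (a x) * ‖f x‖))
        = ∫ x in Ioc (0:ℝ) 1, a x * ‖f x‖ := by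
      refine integral_congr_ae ?_
      filter_upwards [hae] with x hx
      rw [← mul_assoc, Real.mul_self_sqrt hx]
    have h2 : (∫ x in Ioc (0:ℝ) 1, Real.sqrt (a x) ^ 2) = 1 := by
      rw [show (∫ x in Ioc (0:ℝ) 1, Real.sqrt (a x) ^ 2)
        = ∫ x in Ioc (0:ℝ) 1, a x from integral_congr_ae (by
          filter_upwards [hae] with x hx
          rw [Real.sq_sqrt hx])]
      exact ha_one
    have h3 : (∫ x in Ioc (0:ℝ) 1, (Real.sqrt (a x) * ‖f x‖) ^ 2)
        = ∫ x in Ioc (0:ℝ) 1, a x * ‖f x‖ ^ 2 := by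
      refine integral_congr_ae ?_
      filter_upwards [hae] with x hx
      rw [mul_pow, Real.sq_sqrt hx]
    rw [h1, h2, h3] at H
    simpa [hK_def, seminormA] using H
  -- Cauchy-Schwarz II : L ≤ sqrt E2
  have hCS2 : L ≤ Real.sqrt E2 := by
    have hv2_int : Integrable (fun x => ‖deriv u x‖ ^ 2) (volume.restrict (Ioc (0:ℝ) 1)) :=
      (hv_cont.norm.pow 2).integrableOn_Ioc
    have hone_int : Integrable (fun _ : ℝ => (1:ℝ) ^ 2) (volume.restrict (Ioc (0:ℝ) 1)) :=
      integrableOn_const (by rw [meas01]; exact ENNReal.one_ne_top)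
    have H := cs_sqrt (μ := volume.restrict (Ioc (0:ℝ) 1))
      (fun x => ‖deriv u x‖) (fun _ => 1)
      (Filter.Eventually.of_forall fun x => norm_nonneg _)
      (Filter.Eventually.of_forall fun _ => zero_le_one)
      hv_cont.norm.aestronglyMeasurable aestronglyMeasurable_const
      hv2_int hone_int
    simp only [mul_one, one_pow] at H
    rw [setIntegral_const, measureReal_def, meas01] at H
    simpa using H
  -- conclusion
  have hE2LK : E2 ≤ K * Real.sqrt E2 := by
    calc E2 ≤ L * ∫ x in Ioc (0:ℝ) 1, a x * ‖f x‖ := hbound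
    _ ≤ L * K := mul_le_mul_of_nonneg_left hCS1 hL_nonneg
    _ ≤ Real.sqrt E2 * K := mul_le_mul_of_nonneg_right hCS2 hK_nonneg
    _ = K * Real.sqrt E2 := mul_comm _ _
  have hEK : Real.sqrt E2 ≤ K := by
    rcases eq_or_lt_of_le (Real.sqrt_nonneg E2) with h0 | h0
    · rw [← h0]; exact hK_nonneg
    · have hsq : Real.sqrt E2 ^ 2 = E2 := Real.sq_sqrt hE2_nonneg
      nlinarith [hE2LK, hsq, h0]
  exact ⟨hEK, fun x => le_trans (hpt x) (le_trans hCS2 hEK)⟩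
end
end

section
/- Let W ∈ 𝒲, i.e. W : ℝ → ℝ is right-continuous, increasing, W(0) = 0, W(x+1) = W(x) + 1, and the Lebesgue measure on 𝕋 is absolutely continuous with respect to the probability measure μ associated to W. Let w(s) = sup{r : W(r) ≤ s} be the generalized inverse of W. Then w is absolutely continuous on [0,1]; in particular, w is continuous, nondecreasing, and has the Lusin property: for every measurable set E ⊆ [0,1] of Lebesgue measure zero, the image w(E) has Lebesgue measure zero. -/
open MeasureTheory Set Filter Topology Function ENNReal

noncomputable section

/-- `W ∈ 𝒲`: a right-continuous increasing function (bundled as a Stieltjes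
function) with `W 0 = 0`, `W (x+1) = W x + 1`, whose associated measure `μ`
(with `μ((a,b]) = W b - W a`) is such that Lebesgue measure is absolutely
continuous with respect to it. -/
def MemW (W : StieltjesFunction ℝ) : Prop :=
  W 0 = 0 ∧ (∀ x, W (x + 1) = W x + 1) ∧ volume ≪ W.measure

/-- for `W ∈ 𝒲`, the generalized inverse
`w(s) = sup {r : W r ≤ s}` is absolutely continuous on `[0,1]`; in particular
it is continuous, nondecreasing and has the Lusin property (it maps Lebesgue
null subsets of `[0,1]` to null sets). -/
theorem statement_16 (W : StieltjesFunction ℝ) (hW : MemW W)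
    (w : ℝ → ℝ) (hw : ∀ s, w s = sSup {r : ℝ | W r ≤ s}) :
    -- absolute continuity of `w` on `[0,1]` (ε-δ form over finite disjoint
    -- families of subintervals):
    (∀ ε > 0, ∃ δ > 0, ∀ (n : ℕ) (α β : Fin n → ℝ),
      (∀ i, α i ∈ Icc (0:ℝ) 1 ∧ β i ∈ Icc (0:ℝ) 1 ∧ α i ≤ β i) →
      (Pairwise fun i j => Disjoint (Ioo (α i) (β i)) (Ioo (α j) (β j))) →
      (∑ i, (β i - α i)) < δ →
      (∑ i, |w (β i) - w (α i)|) < ε) ∧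
    -- in particular, `w` is continuous and nondecreasing on `[0,1]`
    ContinuousOn w (Icc 0 1) ∧
    MonotoneOn w (Icc 0 1) ∧
    -- and has the Lusin property
    (∀ E ⊆ Icc (0:ℝ) 1, MeasurableSet E → volume E = 0 →
      volume (w '' E) = 0) := by
  obtain ⟨h0, h1, hac⟩ := hW
  have hmono := W.mono
  set μ := W.measure with hμ
  -- `W` is the identity on the integers
  have hint : ∀ k : ℤ, W (k : ℝ) = (k : ℝ) := by
    intro k
    induction k using Int.induction_on with
    | zero => exact_mod_cast h0
    | succ n ih => push_cast; rw [h1]; push_cast at ih; rw [ih]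
    | pred n ih =>
        have h := h1 (-(n : ℝ) - 1)
        push_cast at ih ⊢
        rw [show -(n : ℝ) - 1 + 1 = -(n : ℝ) by ring] at h
        linarith
  -- elementary bounds on `W`
  have hub : ∀ x : ℝ, W x ≤ x + 1 := by
    intro x
    calc W x ≤ W (⌈x⌉ : ℝ) := hmono (Int.le_ceil x)
      _ = (⌈x⌉ : ℝ) := hint _
      _ ≤ x + 1 := le_of_lt (Int.ceil_lt_add_one x)
  have hlb : ∀ x : ℝ, x - 1 ≤ W x := by
    intro x
    calc x - 1 ≤ (⌊x⌋ : ℝ) := le_of_lt (Int.sub_one_lt_floor x)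
      _ = W (⌊x⌋ : ℝ) := (hint _).symm
      _ ≤ W x := hmono (Int.floor_le x)
  -- the defining set of `w` is nonempty and bounded above
  have hne : ∀ s : ℝ, ({r : ℝ | W r ≤ s}).Nonempty := by
    intro s
    exact ⟨s - 1, by simp only [mem_setOf_eq]; linarith [hub (s - 1)]⟩
  have hbdd : ∀ s : ℝ, BddAbove {r : ℝ | W r ≤ s} := by
    intro s
    refine ⟨s + 1, fun r hr => ?_⟩
    simp only [mem_setOf_eq] at hr
    linarith [hlb r]
  have hle_w : ∀ {r s : ℝ}, W r ≤ s → r ≤ w s := by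
    intro r s h
    rw [hw]
    exact le_csSup (hbdd s) h
  -- `s ≤ W (w s)`
  have hWws : ∀ s : ℝ, s ≤ W (w s) := by
    intro s
    by_contra h
    push_neg at h
    have hc : Tendsto W (𝓝[Ici (w s)] (w s)) (𝓝 (W (w s))) := W.right_continuous (w s)
    have hev : ∀ᶠ r in 𝓝[>] (w s), W r < s := by
      have h2 : ∀ᶠ r in 𝓝[Ici (w s)] (w s), W r < s := hc (Iio_mem_nhds h)
      exact h2.filter_mono (nhdsWithin_mono _ (Ioi_subset_Ici le_rfl))
    obtain ⟨r, hr1, hr2⟩ := (eventually_mem_nhdsWithin.and hev).exists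
    have : r ≤ w s := hle_w hr2.le
    exact absurd hr1 (not_lt.mpr this)
  -- `W` is strictly monotone (since Lebesgue ≪ μ)
  have hsmono : StrictMono W := by
    intro a b hab
    by_contra h
    push_neg at h
    have h2 : μ (Ioo a b) = 0 := by
      rw [hμ, W.measure_Ioo]
      have hll : leftLim W b ≤ W a := le_trans (hmono.leftLim_le le_rfl) h
      rw [ENNReal.ofReal_eq_zero]
      linarith
    have h3 := hac h2
    rw [Real.volume_Ioo, ENNReal.ofReal_eq_zero] at h3
    linarith
  -- Galois connection: `w s ≤ r ↔ s ≤ W r`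
  have hgal : ∀ s r : ℝ, w s ≤ r ↔ s ≤ W r := by
    intro s r
    constructor
    · intro h; exact (hWws s).trans (hmono h)
    · intro h
      rw [hw]
      refine csSup_le (hne s) fun r' hr' => ?_
      exact hsmono.le_iff_le.mp (le_trans hr' h)
  have hwmono : Monotone w := fun s t hst => (hgal s (w t)).mpr (hst.trans (hWws t))
  have hwW : ∀ r : ℝ, w (W r) = r := fun r =>
    le_antisymm ((hgal _ r).mpr le_rfl) (hle_w le_rfl)
  have hwsurj : Function.Surjective w := fun r => ⟨W r, hwW r⟩
  have hwcont : Continuous w := hwmono.continuous_of_surjective hwsurj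
  have hwmble : Measurable w := hwcont.measurable
  have hWmble : Measurable (W : ℝ → ℝ) := hmono.measurable
  -- `leftLim W (w s) ≤ s`
  have hleftLim : ∀ s : ℝ, leftLim W (w s) ≤ s := by
    intro s
    refine le_of_tendsto (hmono.tendsto_leftLim (w s)) ?_
    filter_upwards [self_mem_nhdsWithin] with r hr
    have hr' : r < sSup {r : ℝ | W r ≤ s} := by rw [← hw]; exact hr
    obtain ⟨r', hr'mem, hrr'⟩ := exists_lt_of_lt_csSup (hne s) hr'
    exact (hmono hrr'.le).trans hr'mem
  -- key interval estimate : `μ (w a, w b) ≤ b - a`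
  have hIoo : ∀ a b : ℝ, μ (Ioo (w a) (w b)) ≤ ENNReal.ofReal (b - a) := by
    intro a b
    rw [hμ, W.measure_Ioo]
    exact ENNReal.ofReal_le_ofReal (by linarith [hleftLim b, hWws a])
  -- pushforward identity: `map w volume = μ`
  have hmap : Measure.map w volume = μ := by
    symm
    refine Measure.ext_of_Ioc μ (Measure.map w volume) fun a b hab => ?_
    rw [Measure.map_apply hwmble measurableSet_Ioc]
    have hpre : w ⁻¹' (Ioc a b) = Ioc (W a) (W b) := by
      ext s
      simp only [mem_preimage, mem_Ioc]
      constructor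
      · rintro ⟨hl, hr⟩
        refine ⟨?_, (hgal s b).mp hr⟩
        by_contra hc
        push_neg at hc
        exact absurd ((hgal s a).mpr hc) (not_le.mpr hl)
      · rintro ⟨hl, hr⟩
        refine ⟨?_, (hgal s b).mpr hr⟩
        by_contra hc
        push_neg at hc
        exact absurd ((hgal s a).mp hc) (not_le.mpr hl)
    rw [hpre, Real.volume_Ioc, hμ, W.measure_Ioc]
  -- discontinuity points of `W`
  set D := {x : ℝ | ¬ ContinuousAt W x} with hD
  have hDcount : D.Countable := hmono.countable_not_continuousAt
  -- if `W` is continuous at `w s` then `W (w s) = s`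
  have hWeq : ∀ s : ℝ, w s ∉ D → W (w s) = s := by
    intro s hs
    have hcont : ContinuousAt W (w s) := not_not.mp hs
    have ht : Tendsto W (𝓝[<] (w s)) (𝓝 (W (w s))) :=
      hcont.tendsto.mono_left nhdsWithin_le_nhds
    have hll : leftLim W (w s) = W (w s) :=
      leftLim_eq_of_tendsto (h := nhdsLT_neBot (w s)) ht
    have := hleftLim s
    rw [hll] at this
    exact le_antisymm this (hWws s)
  -- Lusin property
  have hlusin : ∀ E ⊆ Icc (0:ℝ) 1, MeasurableSet E → volume E = 0 →
      volume (w '' E) = 0 := by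
    intro E _ hEm hE0
    have hsub : w '' E ⊆ (W ⁻¹' E \ D) ∪ D := by
      rintro x ⟨s, hs, rfl⟩
      by_cases hx : w s ∈ D
      · exact Or.inr hx
      · exact Or.inl ⟨by rw [mem_preimage, hWeq s hx]; exact hs, hx⟩
    have hm : MeasurableSet (W ⁻¹' E \ D) := (hWmble hEm).diff hDcount.measurableSet
    have key : μ (W ⁻¹' E \ D) = 0 := by
      rw [← hmap, Measure.map_apply hwmble hm]
      refine measure_mono_null ?_ hE0
      rintro s ⟨hs1, hs2⟩
      rw [mem_preimage, hWeq s hs2] at hs1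
      exact hs1
    refine le_antisymm ?_ (zero_le)
    calc volume (w '' E) ≤ volume ((W ⁻¹' E \ D) ∪ D) := measure_mono hsub
      _ ≤ volume (W ⁻¹' E \ D) + volume D := measure_union_le _ _
      _ = 0 := by rw [hac key, hDcount.measure_zero]; simp
  -- ε-δ absolute continuity
  have hepsdelta : ∀ ε > 0, ∃ δ > 0, ∀ (n : ℕ) (α β : Fin n → ℝ),
      (∀ i, α i ∈ Icc (0:ℝ) 1 ∧ β i ∈ Icc (0:ℝ) 1 ∧ α i ≤ β i) →
      (Pairwise fun i j => Disjoint (Ioo (α i) (β i)) (Ioo (α j) (β j))) →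
      (∑ i, (β i - α i)) < δ →
      (∑ i, |w (β i) - w (α i)|) < ε := by
    intro ε hε
    set ν := volume.restrict (Icc (w 0) (w 1)) with hν
    haveI : IsFiniteMeasure ν := by
      constructor
      rw [hν, Measure.restrict_apply_univ, Real.volume_Icc]
      exact ENNReal.ofReal_lt_top
    have hνμ : ν ≪ μ :=
      (Measure.absolutelyContinuous_of_le Measure.restrict_le_self).trans hac
    have hfin : ∫⁻ x, ν.rnDeriv μ x ∂μ ≠ ∞ := (Measure.lintegral_rnDeriv_lt_top ν μ).ne
    obtain ⟨δ', hδ'pos, hδ'⟩ :=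
      exists_pos_setLIntegral_lt_of_measure_lt (μ := μ) hfin
        (ENNReal.ofReal_pos.mpr hε).ne'
    refine ⟨(min δ' 1).toReal, ?_, ?_⟩
    · refine ENNReal.toReal_pos ?_ ?_
      · exact (lt_min hδ'pos zero_lt_one).ne'
      · exact ((min_le_right _ _).trans_lt ENNReal.one_lt_top).ne
    intro n α β hαβ hdisj hsum
    set S := ⋃ i, Ioo (w (α i)) (w (β i)) with hS
    have hmS : MeasurableSet S := MeasurableSet.iUnion fun i => measurableSet_Ioo
    have hsum' : ENNReal.ofReal (∑ i, (β i - α i)) < min δ' 1 := by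
      rw [ENNReal.ofReal_lt_iff_lt_toReal
        (Finset.sum_nonneg fun i _ => sub_nonneg.mpr (hαβ i).2.2)
        ((min_le_right _ _).trans_lt ENNReal.one_lt_top).ne]
      exact hsum
    have hμS : μ S < δ' := by
      calc μ S ≤ ∑' i, μ (Ioo (w (α i)) (w (β i))) := measure_iUnion_le _
        _ = ∑ i, μ (Ioo (w (α i)) (w (β i))) := tsum_fintype _
        _ ≤ ∑ i, ENNReal.ofReal (β i - α i) := Finset.sum_le_sum fun i _ => hIoo _ _
        _ = ENNReal.ofReal (∑ i, (β i - α i)) :=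
            (ENNReal.ofReal_sum_of_nonneg fun i _ => sub_nonneg.mpr (hαβ i).2.2).symm
        _ < min δ' 1 := hsum'
        _ ≤ δ' := min_le_left _ _
    have hSsub : S ⊆ Icc (w 0) (w 1) := by
      rw [hS]
      refine iUnion_subset fun i => ?_
      refine (Ioo_subset_Icc_self).trans (Icc_subset_Icc ?_ ?_)
      · exact hwmono (hαβ i).1.1
      · exact hwmono (hαβ i).2.1.2
    have hvolS : volume S < ENNReal.ofReal ε := by
      have h1 : ν S < ENNReal.ofReal ε := by
        rw [← Measure.setLIntegral_rnDeriv' hνμ hmS]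
        exact hδ' S hμS
      have h2 : ν S = volume S := by
        rw [hν, Measure.restrict_apply hmS, inter_eq_self_of_subset_left hSsub]
      rwa [h2] at h1
    have hdisj' : Pairwise (Function.onFun Disjoint
        fun i => Ioo (w (α i)) (w (β i))) := by
      intro i j hij
      have h : min (β i) (β j) ≤ max (α i) (α j) := by
        have h2 := hdisj hij
        simpa only [Set.Ioo_disjoint_Ioo] using h2
      show Disjoint (Ioo (w (α i)) (w (β i))) (Ioo (w (α j)) (w (β j)))
      rw [Set.Ioo_disjoint_Ioo]
      calc min (w (β i)) (w (β j)) = w (min (β i) (β j)) := (hwmono.map_min).symm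
        _ ≤ w (max (α i) (α j)) := hwmono h
        _ = max (w (α i)) (w (α j)) := hwmono.map_max
    have hvol_eq : volume S = ENNReal.ofReal (∑ i, (w (β i) - w (α i))) := by
      rw [hS, measure_iUnion hdisj' fun i => measurableSet_Ioo, tsum_fintype,
        ENNReal.ofReal_sum_of_nonneg fun i _ => sub_nonneg.mpr (hwmono (hαβ i).2.2)]
      refine Finset.sum_congr rfl fun i _ => ?_
      rw [Real.volume_Ioo]
    have hlt : (∑ i, (w (β i) - w (α i))) < ε := by
      rw [hvol_eq] at hvolS
      exact (ENNReal.ofReal_lt_ofReal_iff hε).mp hvolS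
    calc (∑ i, |w (β i) - w (α i)|) = ∑ i, (w (β i) - w (α i)) :=
          Finset.sum_congr rfl fun i _ =>
            abs_of_nonneg (sub_nonneg.mpr (hwmono (hαβ i).2.2))
      _ < ε := hlt
  exact ⟨hepsdelta, hwcont.continuousOn, hwmono.monotoneOn _, hlusin⟩
end
end
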